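/- arXiv:math/0403280 — 4 statements merged into one kernel-verified Lean document; each statement's English description precedes it below -/
import Mathlib

section
/- Let A = Σ{A_{ij} | i,j ∈ I} be the generalized matrix ring of a Γ_I-system. If the ring A is semiprime, then for all s,t ∈ I the A_{ts}-ring A_{st} is semiprime: for every ideal B_{st} of the A_{ts}-ring A_{st}, B_{st}·A_{ts}·B_{st} = 0 implies B_{st} = 0. -/
/-!
Generalized matrix rings (g.m.rings) of a `Γ_I`-system, their g.m.ideals,
g.m.homomorphisms, quotients, and the general theory of radicals,
following Zhang, "The Baer radical of generalized matrix rings".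
-/

universe u v w

set_option autoImplicit false
set_option maxHeartbeats 1000000

/-- A `Γ_I`-system: a family of additive abelian groups `A i j` (`i j : I`)
with multiplications `A i j × A j k → A i k`, additive in each variable and
associative. -/
structure GammaSystem (I : Type u) where
  A : I → I → Type v
  [inst : ∀ i j, AddCommGroup (A i j)]
  mul : ∀ {i j k : I}, A i j → A j k → A i k
  add_mul : ∀ {i j k : I} (x y : A i j) (z : A j k), mul (x + y) z = mul x z + mul y z
  mul_add : ∀ {i j k : I} (w : A i j) (x y : A j k), mul w (x + y) = mul w x + mul w y
  mul_assoc : ∀ {l i j k : I} (w : A l i) (x : A i j) (z : A j k),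
    mul w (mul x z) = mul (mul w x) z

attribute [instance] GammaSystem.inst

variable {I : Type u}

/-- The generalized matrix ring `A = Σ{A_{ij} | i,j ∈ I}` of a `Γ_I`-system:
the external direct sum `⨁_{(i,j)} A i j` (finitely supported families). -/
abbrev GMRing (S : GammaSystem I) : Type (max u v) := Π₀ p : I × I, S.A p.1 p.2

namespace GammaSystem

variable (S : GammaSystem I)

lemma zero_mul' {i j k : I} (z : S.A j k) : S.mul (0 : S.A i j) z = 0 := by
  have h := S.add_mul (0 : S.A i j) 0 z
  rw [add_zero] at h
  exact (add_eq_left.mp h.symm)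

lemma mul_zero' {i j k : I} (w : S.A i j) : S.mul w (0 : S.A j k) = 0 := by
  have h := S.mul_add w (0 : S.A j k) 0
  rw [add_zero] at h
  exact (add_eq_left.mp h.symm)

lemma neg_mul' {i j k : I} (x : S.A i j) (z : S.A j k) :
    S.mul (-x) z = -(S.mul x z) := by
  have h := S.add_mul x (-x) z
  rw [add_neg_cancel, S.zero_mul'] at h
  exact (neg_eq_of_add_eq_zero_right h.symm).symm

lemma mul_neg' {i j k : I} (w : S.A i j) (x : S.A j k) :
    S.mul w (-x) = -(S.mul w x) := by
  have h := S.mul_add w x (-x)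
  rw [add_neg_cancel, S.mul_zero'] at h
  exact (neg_eq_of_add_eq_zero_right h.symm).symm

-- Multiplication of generalized matrices: `(x*y)_{ij} = ∑_k x_{ik} y_{kj}`.
open Classical in
noncomputable def gmul (x y : GMRing S) : GMRing S :=
  x.sum fun p a => y.sum fun q b =>
    if h : p.2 = q.1 then
      DFinsupp.single (p.1, q.2)
        (S.mul a (cast (congrArg (fun t => S.A t q.2) h.symm) b))
    else 0

open Classical in
lemma gmul_inner_zero (p : I × I) (a : S.A p.1 p.2) (q : I × I) :
    (if h : p.2 = q.1 then
      DFinsupp.single (p.1, q.2)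
        (S.mul a (cast (congrArg (fun t => S.A t q.2) h.symm) (0 : S.A q.1 q.2)))
    else (0 : GMRing S)) = (0 : GMRing S) := by
  obtain ⟨p1, p2⟩ := p
  obtain ⟨q1, q2⟩ := q
  by_cases h : p2 = q1
  · subst h
    simp [S.mul_zero']
  · simp [h]

open Classical in
lemma gmul_inner_add (p : I × I) (a : S.A p.1 p.2) (q : I × I) (b₁ b₂ : S.A q.1 q.2) :
    (if h : p.2 = q.1 then
      DFinsupp.single (p.1, q.2)
        (S.mul a (cast (congrArg (fun t => S.A t q.2) h.symm) (b₁ + b₂)))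
    else (0 : GMRing S)) =
    (if h : p.2 = q.1 then
      DFinsupp.single (p.1, q.2)
        (S.mul a (cast (congrArg (fun t => S.A t q.2) h.symm) b₁))
    else (0 : GMRing S)) +
    (if h : p.2 = q.1 then
      DFinsupp.single (p.1, q.2)
        (S.mul a (cast (congrArg (fun t => S.A t q.2) h.symm) b₂))
    else (0 : GMRing S)) := by
  obtain ⟨p1, p2⟩ := p
  obtain ⟨q1, q2⟩ := q
  by_cases h : p2 = q1
  · subst h
    simp [S.mul_add, DFinsupp.single_add]
  · simp [h]

open Classical in
lemma gmul_add (x y z : GMRing S) : S.gmul x (y + z) = S.gmul x y + S.gmul x z := by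
  unfold gmul
  have : ∀ (p : I × I) (a : S.A p.1 p.2),
      (y + z).sum (fun q b =>
        if h : p.2 = q.1 then
          DFinsupp.single (p.1, q.2)
            (S.mul a (cast (congrArg (fun t => S.A t q.2) h.symm) b))
        else (0 : GMRing S)) =
      y.sum (fun q b =>
        if h : p.2 = q.1 then
          DFinsupp.single (p.1, q.2)
            (S.mul a (cast (congrArg (fun t => S.A t q.2) h.symm) b))
        else (0 : GMRing S)) +
      z.sum (fun q b =>
        if h : p.2 = q.1 then
          DFinsupp.single (p.1, q.2)
            (S.mul a (cast (congrArg (fun t => S.A t q.2) h.symm) b))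
        else (0 : GMRing S)) := by
    intro p a
    exact DFinsupp.sum_add_index (fun q => S.gmul_inner_zero p a q)
      (fun q b₁ b₂ => S.gmul_inner_add p a q b₁ b₂)
  calc x.sum (fun p a => (y + z).sum fun q b =>
        if h : p.2 = q.1 then
          DFinsupp.single (p.1, q.2)
            (S.mul a (cast (congrArg (fun t => S.A t q.2) h.symm) b))
        else (0 : GMRing S))
      = x.sum (fun p a =>
          (y.sum fun q b =>
            if h : p.2 = q.1 then
              DFinsupp.single (p.1, q.2)
                (S.mul a (cast (congrArg (fun t => S.A t q.2) h.symm) b))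
            else (0 : GMRing S)) +
          (z.sum fun q b =>
            if h : p.2 = q.1 then
              DFinsupp.single (p.1, q.2)
                (S.mul a (cast (congrArg (fun t => S.A t q.2) h.symm) b))
            else (0 : GMRing S))) := by
        exact congrArg (DFinsupp.sum x) (funext fun p => funext fun a => this p a)
    _ = _ := DFinsupp.sum_add

open Classical in
lemma add_gmul (x y z : GMRing S) : S.gmul (x + y) z = S.gmul x z + S.gmul y z := by
  unfold gmul
  refine DFinsupp.sum_add_index (fun p => ?_) (fun p a₁ a₂ => ?_)
  · have : (fun (q : I × I) (b : S.A q.1 q.2) =>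
        (if h : p.2 = q.1 then
          DFinsupp.single (p.1, q.2)
            (S.mul (0 : S.A p.1 p.2) (cast (congrArg (fun t => S.A t q.2) h.symm) b))
        else (0 : GMRing S))) = fun q b => (0 : GMRing S) := by
      funext q b
      obtain ⟨p1, p2⟩ := p
      obtain ⟨q1, q2⟩ := q
      by_cases h : p2 = q1
      · subst h; simp [S.zero_mul']
      · simp [h]
    rw [congrArg (DFinsupp.sum z) this, DFinsupp.sum_zero]
  · have : (fun (q : I × I) (b : S.A q.1 q.2) =>
        (if h : p.2 = q.1 then
          DFinsupp.single (p.1, q.2)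
            (S.mul (a₁ + a₂) (cast (congrArg (fun t => S.A t q.2) h.symm) b))
        else (0 : GMRing S))) = fun q b =>
        (if h : p.2 = q.1 then
          DFinsupp.single (p.1, q.2)
            (S.mul a₁ (cast (congrArg (fun t => S.A t q.2) h.symm) b))
        else (0 : GMRing S)) +
        (if h : p.2 = q.1 then
          DFinsupp.single (p.1, q.2)
            (S.mul a₂ (cast (congrArg (fun t => S.A t q.2) h.symm) b))
        else (0 : GMRing S)) := by
      funext q b
      obtain ⟨p1, p2⟩ := p
      obtain ⟨q1, q2⟩ := q
      by_cases h : p2 = q1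
      · subst h; simp [S.add_mul, DFinsupp.single_add]
      · simp [h]
    rw [congrArg (DFinsupp.sum z) this, DFinsupp.sum_add]

open Classical in
lemma zero_gmul (y : GMRing S) : S.gmul 0 y = 0 := by
  unfold gmul
  exact DFinsupp.sum_zero_index

open Classical in
lemma gmul_zero (x : GMRing S) : S.gmul x 0 = 0 := by
  unfold gmul
  have : (fun (p : I × I) (a : S.A p.1 p.2) =>
      DFinsupp.sum (0 : GMRing S) (fun q b =>
        if h : p.2 = q.1 then
          DFinsupp.single (p.1, q.2)
            (S.mul a (cast (congrArg (fun t => S.A t q.2) h.symm) b))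
        else (0 : GMRing S))) = fun p a => (0 : GMRing S) := by
    funext p a
    exact DFinsupp.sum_zero_index
  rw [congrArg (DFinsupp.sum x) this, DFinsupp.sum_zero]

open Classical in
lemma gmul_single (p : I × I) (a : S.A p.1 p.2) (y : GMRing S) :
    S.gmul (DFinsupp.single p a) y =
      y.sum fun q b =>
        if h : p.2 = q.1 then
          DFinsupp.single (p.1, q.2)
            (S.mul a (cast (congrArg (fun t => S.A t q.2) h.symm) b))
        else 0 := by
  unfold gmul
  refine DFinsupp.sum_single_index ?_
  have : (fun (q : I × I) (b : S.A q.1 q.2) =>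
      (if h : p.2 = q.1 then
        DFinsupp.single (p.1, q.2)
          (S.mul (0 : S.A p.1 p.2) (cast (congrArg (fun t => S.A t q.2) h.symm) b))
      else (0 : GMRing S))) = fun q b => (0 : GMRing S) := by
    funext q b
    obtain ⟨p1, p2⟩ := p; obtain ⟨q1, q2⟩ := q
    by_cases h : p2 = q1
    · subst h; simp [S.zero_mul']
    · simp [h]
  rw [congrArg (DFinsupp.sum y) this, DFinsupp.sum_zero]

open Classical in
lemma gmul_single_single (p q : I × I) (a : S.A p.1 p.2) (b : S.A q.1 q.2) :
    S.gmul (DFinsupp.single p a) (DFinsupp.single q b) =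
      if h : p.2 = q.1 then
        DFinsupp.single (p.1, q.2)
          (S.mul a (cast (congrArg (fun t => S.A t q.2) h.symm) b))
      else 0 := by
  rw [S.gmul_single]
  exact DFinsupp.sum_single_index (S.gmul_inner_zero p a q)

open Classical in
lemma gmul_single_assoc (p q r : I × I) (a : S.A p.1 p.2) (b : S.A q.1 q.2)
    (c : S.A r.1 r.2) :
    S.gmul (S.gmul (DFinsupp.single p a) (DFinsupp.single q b)) (DFinsupp.single r c) =
    S.gmul (DFinsupp.single p a) (S.gmul (DFinsupp.single q b) (DFinsupp.single r c)) := by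
  obtain ⟨p1, p2⟩ := p; obtain ⟨q1, q2⟩ := q; obtain ⟨r1, r2⟩ := r
  by_cases h1 : p2 = q1
  · subst h1
    by_cases h2 : q2 = r1
    · subst h2
      rw [S.gmul_single_single (p1, p2) (p2, q2) a b, dif_pos rfl,
        S.gmul_single_single (p2, q2) (q2, r2) b c, dif_pos rfl,
        S.gmul_single_single (p1, q2) (q2, r2) _ c, dif_pos rfl,
        S.gmul_single_single (p1, p2) (p2, r2) a _, dif_pos rfl]
      show DFinsupp.single (p1, r2) _ = DFinsupp.single (p1, r2) _
      rw [show (cast (congrArg (fun t => S.A t q2) (Eq.symm rfl)) b) = b from rfl,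
        show (cast (congrArg (fun t => S.A t r2) (Eq.symm rfl)) c) = c from rfl]
      exact congrArg _ (S.mul_assoc a b c).symm
    · rw [S.gmul_single_single (p1, p2) (p2, q2) a b, dif_pos rfl,
        S.gmul_single_single (p2, q2) (r1, r2) b c, dif_neg h2,
        S.gmul_single_single (p1, q2) (r1, r2) _ c, dif_neg h2, S.gmul_zero]
  · by_cases h2 : q2 = r1
    · subst h2
      rw [S.gmul_single_single (p1, p2) (q1, q2) a b, dif_neg h1,
        S.gmul_single_single (q1, q2) (q2, r2) b c, dif_pos rfl,
        S.gmul_single_single (p1, p2) (q1, r2) a _, dif_neg h1, S.zero_gmul]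
    · rw [S.gmul_single_single (p1, p2) (q1, q2) a b, dif_neg h1,
        S.gmul_single_single (q1, q2) (r1, r2) b c, dif_neg h2,
        S.zero_gmul, S.gmul_zero]

open Classical in
lemma gmul_single_single_assoc' (p q : I × I) (a : S.A p.1 p.2) (b : S.A q.1 q.2)
    (z : GMRing S) :
    S.gmul (S.gmul (DFinsupp.single p a) (DFinsupp.single q b)) z =
    S.gmul (DFinsupp.single p a) (S.gmul (DFinsupp.single q b) z) := by
  induction z using DFinsupp.induction with
  | h0 => simp only [S.gmul_zero, S.zero_gmul]
  | ha r c f hf hc ih =>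
      rw [S.gmul_add, S.gmul_add, S.gmul_add, ih, S.gmul_single_assoc]

open Classical in
lemma gmul_single_assoc'' (p : I × I) (a : S.A p.1 p.2) (y z : GMRing S) :
    S.gmul (S.gmul (DFinsupp.single p a) y) z =
    S.gmul (DFinsupp.single p a) (S.gmul y z) := by
  induction y using DFinsupp.induction with
  | h0 => simp only [S.gmul_zero, S.zero_gmul]
  | ha q b f hf hb ih =>
      rw [S.gmul_add, S.add_gmul, S.add_gmul, S.gmul_add, ih,
        S.gmul_single_single_assoc']

open Classical in
lemma gmul_assoc (x y z : GMRing S) :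
    S.gmul (S.gmul x y) z = S.gmul x (S.gmul y z) := by
  induction x using DFinsupp.induction with
  | h0 => simp only [S.gmul_zero, S.zero_gmul]
  | ha p a f hf ha ih =>
      rw [S.add_gmul, S.add_gmul, S.add_gmul, ih, S.gmul_single_assoc'']

noncomputable instance : NonUnitalNonAssocRing (GMRing S) :=
  { (inferInstance : AddCommGroup (GMRing S)) with
    mul := S.gmul
    left_distrib := S.gmul_add
    right_distrib := fun x y z => S.add_gmul x y z
    zero_mul := S.zero_gmul
    mul_zero := S.gmul_zero }

/-- The generalized matrix ring is a (possibly non-unital) associative ring. -/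
noncomputable instance : NonUnitalRing (GMRing S) :=
  { (inferInstance : NonUnitalNonAssocRing (GMRing S)) with
    mul_assoc := S.gmul_assoc }

/-- A `Γ_I`-system (g.m.ring) is zero if all its components are zero. -/
def IsZero : Prop := ∀ (i j : I) (x : S.A i j), x = 0

/-- `x ∈ A_{ij}` is `m`-nilpotent in the `A_{ji}`-ring `A_{ij}`: every
`m`-sequence `a_{n+1} = a_n u_n a_n` (`u_n ∈ A_{ji}`) with `a_1 = x`
satisfies `a_k = 0` for some `k`. -/
def MNilpotent (i j : I) (x : S.A i j) : Prop :=
  ∀ a : ℕ → S.A i j, a 0 = x →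
    (∀ n, ∃ u : S.A j i, a (n + 1) = S.mul (S.mul (a n) u) (a n)) →
    ∃ k, a k = 0

/-- The Baer radical `r_b(A_{ij})` of the `A_{ji}`-ring `A_{ij}`: the set of
its `m`-nilpotent elements. -/
def componentBaer (i j : I) : Set (S.A i j) := { x | S.MNilpotent i j x }

end GammaSystem

section RingNotions

variable (R : Type w) [NonUnitalRing R]

/-- A two-sided ideal `P` of a (possibly non-unital) ring is prime if
`BC ⊆ P` implies `B ⊆ P` or `C ⊆ P`. -/
def TwoSidedIdeal.IsPrimeIdeal {R : Type w} [NonUnitalRing R]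
    (P : TwoSidedIdeal R) : Prop :=
  ∀ B C : TwoSidedIdeal R, (∀ b ∈ B, ∀ c ∈ C, b * c ∈ P) → B ≤ P ∨ C ≤ P

/-- The Baer radical of a (possibly non-unital) ring: the intersection of all
prime two-sided ideals. -/
def baerRadical : Set R := { x | ∀ P : TwoSidedIdeal R, P.IsPrimeIdeal → x ∈ P }

/-- `x` is an `m`-nilpotent element of the ring `R`: every `m`-sequence
`a_{n+1} = a_n u_n a_n` (`u_n ∈ R`) with `a_1 = x` reaches `0`. -/
def IsMNilpotent {R : Type w} [NonUnitalRing R] (x : R) : Prop :=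
  ∀ a : ℕ → R, a 0 = x → (∀ n, ∃ u : R, a (n + 1) = a n * u * a n) → ∃ k, a k = 0

/-- `x` is `m`-nilpotent in the subring given by the subset `T` of `R`:
every `m`-sequence lying in `T`, with multipliers `u_n ∈ T`, starting at `x`,
reaches `0`. -/
def IsMNilpotentIn {R : Type w} [NonUnitalRing R] (T : Set R) (x : R) : Prop :=
  ∀ a : ℕ → R, (∀ n, a n ∈ T) → a 0 = x →
    (∀ n, ∃ u ∈ T, a (n + 1) = a n * u * a n) → ∃ k, a k = 0

/-- A ring is prime if `BC = 0` implies `B = 0` or `C = 0` for all two-sided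
ideals `B, C`. -/
def IsPrimeRing : Prop :=
  ∀ B C : TwoSidedIdeal R, (∀ b ∈ B, ∀ c ∈ C, b * c = 0) → B = ⊥ ∨ C = ⊥

/-- A ring is semiprime if `B·B = 0` implies `B = 0` for every two-sided
ideal `B`. -/
def IsSemiprimeRing : Prop :=
  ∀ B : TwoSidedIdeal R, (∀ x ∈ B, ∀ y ∈ B, x * y = 0) → B = ⊥

/-- The annihilator `B* = {x ∈ R | xB = Bx = 0}` of a two-sided ideal. -/
def TwoSidedIdeal.annihilator {R : Type w} [NonUnitalRing R]
    (B : TwoSidedIdeal R) : TwoSidedIdeal R :=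
  TwoSidedIdeal.mk' { x | ∀ b ∈ B, x * b = 0 ∧ b * x = 0 }
    (fun b hb => ⟨zero_mul b, mul_zero b⟩)
    (fun {x y} hx hy b hb =>
      ⟨by rw [add_mul, (hx b hb).1, (hy b hb).1, add_zero],
       by rw [mul_add, (hx b hb).2, (hy b hb).2, add_zero]⟩)
    (fun {x} hx b hb =>
      ⟨by rw [neg_mul, (hx b hb).1, neg_zero],
       by rw [mul_neg, (hx b hb).2, neg_zero]⟩)
    (fun {x y} hy b hb => by
      refine ⟨?_, ?_⟩
      · rw [mul_assoc, (hy b hb).1, mul_zero]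
      · rw [← mul_assoc]
        exact (hy (b * x) (B.mul_mem_right b x hb)).2)
    (fun {x y} hx b hb => by
      refine ⟨?_, ?_⟩
      · rw [mul_assoc]
        exact (hx (y * b) (B.mul_mem_left y b hb)).1
      · rw [← mul_assoc, (hx b hb).2, zero_mul])

end RingNotions

/-- A g.m.ideal of the g.m.ring of `S`: a family of additive subgroups
`B i j ≤ A i j` with `B_{ij} A_{jk} ⊆ B_{ik}` and `A_{ij} B_{jk} ⊆ B_{ik}`. -/
structure GMIdeal (S : GammaSystem I) where
  B : ∀ i j : I, AddSubgroup (S.A i j)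
  mul_mem_right : ∀ {i j k : I} (x : S.A i j) (z : S.A j k), x ∈ B i j → S.mul x z ∈ B i k
  mul_mem_left : ∀ {i j k : I} (x : S.A i j) (z : S.A j k), z ∈ B j k → S.mul x z ∈ B i k

namespace GMIdeal

variable {S : GammaSystem I} (N : GMIdeal S)

/-- The subset of the g.m.ring consisting of the generalized matrices all of
whose components lie in the g.m.ideal `N`. -/
def carrier : Set (GMRing S) := { x | ∀ p : I × I, x p ∈ N.B p.1 p.2 }

/-- A g.m.ideal is zero if all its components are the zero subgroup. -/
def IsZero : Prop := ∀ i j : I, N.B i j = ⊥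

/-- A g.m.ideal regarded as a g.m.ring (a `Γ_I`-system) in its own right. -/
def toSystem : GammaSystem I where
  A i j := N.B i j
  inst i j := inferInstance
  mul {i j k} x z := ⟨S.mul x.1 z.1, N.mul_mem_right x.1 z.1 x.2⟩
  add_mul x y z := Subtype.ext (S.add_mul x.1 y.1 z.1)
  mul_add w x y := Subtype.ext (S.mul_add w.1 x.1 y.1)
  mul_assoc w x z := Subtype.ext (S.mul_assoc w.1 x.1 z.1)

/-- The quotient g.m.ring `A//B`, with components `A_{ij}/B_{ij}`. -/
def quotSystem : GammaSystem I where
  A i j := S.A i j ⧸ N.B i j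
  inst i j := inferInstance
  mul {i j k} x z :=
    Quotient.liftOn₂' x z
      (fun a b => ((S.mul a b : S.A i k) : S.A i k ⧸ N.B i k))
      (by
        intro a₁ a₂ b₁ b₂ h₁ h₂
        replace h₁ := (QuotientAddGroup.leftRel_apply).mp h₁
        replace h₂ := (QuotientAddGroup.leftRel_apply).mp h₂
        refine (QuotientAddGroup.eq).mpr ?_
        have : -(S.mul a₁ a₂) + S.mul b₁ b₂ =
            S.mul (-a₁ + b₁) a₂ + S.mul b₁ (-a₂ + b₂) := by
          rw [S.add_mul, S.mul_add, S.neg_mul', S.mul_neg']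
          abel
        rw [this]
        exact add_mem (N.mul_mem_right _ _ h₁) (N.mul_mem_left _ _ h₂))
  add_mul {i j k} x y z := by
    refine Quotient.inductionOn₃' x y z ?_
    intro a b c
    show ((S.mul (a + b) c : S.A i k) : S.A i k ⧸ N.B i k) = _
    rw [S.add_mul]
    rfl
  mul_add {i j k} w x y := by
    refine Quotient.inductionOn₃' w x y ?_
    intro a b c
    show ((S.mul a (b + c) : S.A i k) : S.A i k ⧸ N.B i k) = _
    rw [S.mul_add]
    rfl
  mul_assoc {l i j k} w x z := by
    refine Quotient.inductionOn₃' w x z ?_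
    intro a b c
    show ((S.mul a (S.mul b c) : S.A l k) : S.A l k ⧸ N.B l k) = _
    rw [S.mul_assoc]
    rfl

/-- The annihilator g.m.ideal `B* = {x ∈ A | xB = Bx = 0}` of a g.m.ideal. -/
def ann : GMIdeal S where
  B i j :=
    { carrier := { x | (∀ (k : I) (b : S.A j k), b ∈ N.B j k → S.mul x b = 0) ∧
        (∀ (k : I) (b : S.A k i), b ∈ N.B k i → S.mul b x = 0) }
      add_mem' := by
        rintro x y ⟨hx₁, hx₂⟩ ⟨hy₁, hy₂⟩
        refine ⟨fun k b hb => ?_, fun k b hb => ?_⟩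
        · rw [S.add_mul, hx₁ k b hb, hy₁ k b hb, add_zero]
        · rw [S.mul_add, hx₂ k b hb, hy₂ k b hb, add_zero]
      zero_mem' := ⟨fun k b _ => S.zero_mul' b, fun k b _ => S.mul_zero' b⟩
      neg_mem' := by
        rintro x ⟨hx₁, hx₂⟩
        refine ⟨fun k b hb => ?_, fun k b hb => ?_⟩
        · rw [S.neg_mul', hx₁ k b hb, neg_zero]
        · rw [S.mul_neg', hx₂ k b hb, neg_zero] }
  mul_mem_right := by
    rintro i j k x z ⟨hx₁, hx₂⟩
    refine ⟨fun m b hb => ?_, fun m b hb => ?_⟩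
    · rw [← S.mul_assoc]
      exact hx₁ m (S.mul z b) (N.mul_mem_left z b hb)
    · rw [S.mul_assoc, hx₂ m b hb, S.zero_mul']
  mul_mem_left := by
    rintro i j k x z ⟨hz₁, hz₂⟩
    refine ⟨fun m b hb => ?_, fun m b hb => ?_⟩
    · rw [← S.mul_assoc, hz₁ m b hb, S.mul_zero']
    · rw [S.mul_assoc]
      exact hz₂ m (S.mul b x) (N.mul_mem_right b x hb)

/-- `N` is a "Baer radical" g.m.ideal: every element of the ring `N` is
`m`-nilpotent in the ring `N`. -/
def IsBaerGMIdeal : Prop := ∀ x ∈ N.carrier, IsMNilpotentIn N.carrier x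

end GMIdeal

/-- A g.m.homomorphism between two g.m.rings over the same index set. -/
structure GMHom (S T : GammaSystem I) where
  f : ∀ i j : I, S.A i j → T.A i j
  map_add : ∀ {i j : I} (x y : S.A i j), f i j (x + y) = f i j x + f i j y
  map_mul : ∀ {i j k : I} (x : S.A i j) (z : S.A j k),
    f i k (S.mul x z) = T.mul (f i j x) (f j k z)

/-- A g.m.homomorphism is surjective if each component map is onto. -/
def GMHom.Surjective {S T : GammaSystem I} (ψ : GMHom S T) : Prop :=
  ∀ i j : I, Function.Surjective (ψ.f i j)

/-- The componentwise intersection `\bar r_b(A)` of all g.m.ideals `B` of `A`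
such that the quotient ring `A//B` is a prime ring. -/
def gmBarBaer (S : GammaSystem I) : Set (GMRing S) :=
  { x | ∀ B : GMIdeal S, IsPrimeRing (GMRing B.quotSystem) →
      ∀ p : I × I, x p ∈ B.B p.1 p.2 }

section RadicalTheory

/-- `N` is the largest g.m.ideal of `S` belonging (as a g.m.ring) to the
class `r`. -/
def IsLargestRadicalIdeal (r : ∀ I₀ : Type u, GammaSystem.{u, v} I₀ → Prop)
    {I : Type u} (S : GammaSystem I) (N : GMIdeal S) : Prop :=
  r I N.toSystem ∧ ∀ M : GMIdeal S, r I M.toSystem → ∀ i j : I, M.B i j ≤ N.B i j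

/-- `r` is a radical property of g.m.rings: (R1) closure under surjective
g.m.homomorphic images; (R2) every g.m.ring has a largest `r`-g.m.ideal `r(A)`;
(R3) `A//r(A)` has no non-zero `r`-g.m.ideal. -/
def IsGMRadicalProperty (r : ∀ I₀ : Type u, GammaSystem.{u, v} I₀ → Prop) : Prop :=
  (∀ (I₀ : Type u) (S T : GammaSystem I₀) (ψ : GMHom S T),
      ψ.Surjective → r I₀ S → r I₀ T) ∧
  (∀ (I₀ : Type u) (S : GammaSystem I₀), ∃ N : GMIdeal S,
      IsLargestRadicalIdeal r S N ∧
      ∀ P : GMIdeal N.quotSystem, r I₀ P.toSystem → P.IsZero)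

/-- `S` is `r`-semisimple: `r(S) = 0`, i.e. every `r`-g.m.ideal of `S` is zero. -/
def GMSemisimple (r : ∀ I₀ : Type u, GammaSystem.{u, v} I₀ → Prop)
    {I : Type u} (S : GammaSystem I) : Prop :=
  ∀ N : GMIdeal S, r I N.toSystem → N.IsZero

/-- `S` can be g.m.homomorphically mapped onto a non-zero member of the
class `K`. -/
def MapsOntoNonzeroMember (K : ∀ I₀ : Type u, GammaSystem.{u, v} I₀ → Prop)
    {I : Type u} (S : GammaSystem I) : Prop :=
  ∃ (T : GammaSystem.{u, v} I) (ψ : GMHom S T),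
    ψ.Surjective ∧ ¬ T.IsZero ∧ K I T

/-- Condition (Q1): every non-zero g.m.ideal of any member of `K` can be
g.m.homomorphically mapped onto a non-zero member of `K`. -/
def Q1Cond (K : ∀ I₀ : Type u, GammaSystem.{u, v} I₀ → Prop) : Prop :=
  ∀ (I₀ : Type u) (S : GammaSystem I₀), K I₀ S →
    ∀ N : GMIdeal S, ¬ N.IsZero → MapsOntoNonzeroMember K N.toSystem

/-- Condition (Q2): if every non-zero g.m.ideal of `A` can be
g.m.homomorphically mapped onto a non-zero member of `K`, then `A ∈ K`. -/
def Q2Cond (K : ∀ I₀ : Type u, GammaSystem.{u, v} I₀ → Prop) : Prop :=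
  ∀ (I₀ : Type u) (S : GammaSystem I₀),
    (∀ N : GMIdeal S, ¬ N.IsZero → MapsOntoNonzeroMember K N.toSystem) → K I₀ S

/-- The radical class of the upper radical `r^K` determined by `K`: the
g.m.rings which cannot be g.m.homomorphically mapped onto a non-zero member
of `K`. -/
def UpperRadicalClass (K : ∀ I₀ : Type u, GammaSystem.{u, v} I₀ → Prop)
    (I : Type u) (S : GammaSystem I) : Prop :=
  ¬ MapsOntoNonzeroMember K S

/-- A g.m.weakly special class: (WS1) every member is a semiprime ring;
(WS2) g.m.ideals of members are members; (WS3) if a g.m.ideal `B` of `A`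
is in the class, then `A//B*` is in the class. -/
def IsGMWeaklySpecial (K : ∀ I₀ : Type u, GammaSystem.{u, v} I₀ → Prop) : Prop :=
  (∀ (I₀ : Type u) (S : GammaSystem I₀), K I₀ S → IsSemiprimeRing (GMRing S)) ∧
  (∀ (I₀ : Type u) (S : GammaSystem I₀) (B : GMIdeal S), K I₀ S → K I₀ B.toSystem) ∧
  (∀ (I₀ : Type u) (S : GammaSystem I₀) (B : GMIdeal S),
      K I₀ B.toSystem → K I₀ B.ann.quotSystem)

/-- A g.m.special class: (S1) every member is a prime ring;
(S2) g.m.ideals of members are members; (S3) if a g.m.ideal `B` of `A`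
is in the class, then `A//B*` is in the class. -/
def IsGMSpecial (K : ∀ I₀ : Type u, GammaSystem.{u, v} I₀ → Prop) : Prop :=
  (∀ (I₀ : Type u) (S : GammaSystem I₀), K I₀ S → IsPrimeRing (GMRing S)) ∧
  (∀ (I₀ : Type u) (S : GammaSystem I₀) (B : GMIdeal S), K I₀ S → K I₀ B.toSystem) ∧
  (∀ (I₀ : Type u) (S : GammaSystem I₀) (B : GMIdeal S),
      K I₀ B.toSystem → K I₀ B.ann.quotSystem)

end RadicalTheory

section RingClasses

/-- A weakly special class of (possibly non-unital) rings: members are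
semiprime, two-sided ideals of members are members (as rings), and if a
two-sided ideal `B` of `A` is a member then `A/B*` is a member. -/
def IsWeaklySpecialRingClass (K : ∀ (R : Type w) [NonUnitalRing R], Prop) : Prop :=
  (∀ (R : Type w) [NonUnitalRing R], K R → IsSemiprimeRing R) ∧
  (∀ (R : Type w) [NonUnitalRing R] (B : TwoSidedIdeal R), K R → K B) ∧
  (∀ (R : Type w) [NonUnitalRing R] (B : TwoSidedIdeal R),
      K B → K B.annihilator.ringCon.Quotient)

/-- A special class of rings: a weakly special class all of whose members are
prime rings. -/
def IsSpecialRingClass (K : ∀ (R : Type w) [NonUnitalRing R], Prop) : Prop :=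
  (∀ (R : Type w) [NonUnitalRing R], K R → IsPrimeRing R) ∧
  (∀ (R : Type w) [NonUnitalRing R] (B : TwoSidedIdeal R), K R → K B) ∧
  (∀ (R : Type w) [NonUnitalRing R] (B : TwoSidedIdeal R),
      K B → K B.annihilator.ringCon.Quotient)

/-- The (upper) radical of the ring `R` determined by a class `K` of rings:
the intersection of all two-sided ideals `B` with `R/B ∈ K`. -/
def ringRadical (K : ∀ (R : Type w) [NonUnitalRing R], Prop)
    (R : Type w) [NonUnitalRing R] : Set R :=
  { x | ∀ B : TwoSidedIdeal R, K B.ringCon.Quotient → x ∈ B }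

/-- A radical property of rings: closure under surjective homomorphic images,
existence of a largest `r`-ideal, and `r`-semisimplicity of the quotient by it. -/
def IsRingRadicalProperty (K : ∀ (R : Type w) [NonUnitalRing R], Prop) : Prop :=
  (∀ (R S : Type w) [NonUnitalRing R] [NonUnitalRing S] (f : R →ₙ+* S),
      Function.Surjective f → K R → K S) ∧
  (∀ (R : Type w) [NonUnitalRing R], ∃ B : TwoSidedIdeal R,
      K B ∧ (∀ C : TwoSidedIdeal R, K C → C ≤ B) ∧
      ∀ D : TwoSidedIdeal B.ringCon.Quotient, K D → D = ⊥)

end RingClasses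

/-- An ideal of the `A_{ts}`-ring `A_{st}` (a `Γ`-ring with `M = A_{st}`,
`Γ = A_{ts}`): an additive subgroup `B` with `B·A_{ts}·A_{st} ⊆ B` and
`A_{st}·A_{ts}·B ⊆ B`. -/
structure GammaIdeal (S : GammaSystem I) (s t : I) where
  carrier : AddSubgroup (S.A s t)
  mul_mem_right : ∀ b ∈ carrier, ∀ (u : S.A t s) (y : S.A s t),
    S.mul (S.mul b u) y ∈ carrier
  mul_mem_left : ∀ (x : S.A s t) (u : S.A t s), ∀ b ∈ carrier,
    S.mul (S.mul x u) b ∈ carrier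

section SemiprimeAux

variable {R : Type*} [NonUnitalRing R]

/-- The generating set (as additive subgroup) of the two-sided ideal generated by `x`. -/
private def genT (x : R) : Set R :=
  {t | t = x ∨ (∃ a, t = a * x) ∨ (∃ b, t = x * b) ∨ ∃ a b, t = a * x * b}

private lemma genT_self (x : R) : x ∈ genT x := Or.inl rfl

private lemma genT_mul_left {x : R} (r : R) {t : R} (ht : t ∈ genT x) :
    r * t ∈ genT x := by
  rcases ht with rfl | ⟨a, rfl⟩ | ⟨b, rfl⟩ | ⟨a, b, rfl⟩
  · exact Or.inr (Or.inl ⟨r, rfl⟩)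
  · exact Or.inr (Or.inl ⟨r * a, by rw [mul_assoc]⟩)
  · exact Or.inr (Or.inr (Or.inr ⟨r, b, by rw [mul_assoc]⟩))
  · exact Or.inr (Or.inr (Or.inr ⟨r * a, b, by simp only [mul_assoc]⟩))

private lemma genT_mul_right {x : R} (r : R) {t : R} (ht : t ∈ genT x) :
    t * r ∈ genT x := by
  rcases ht with rfl | ⟨a, rfl⟩ | ⟨b, rfl⟩ | ⟨a, b, rfl⟩
  · exact Or.inr (Or.inr (Or.inl ⟨r, rfl⟩))
  · exact Or.inr (Or.inr (Or.inr ⟨a, r, rfl⟩))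
  · exact Or.inr (Or.inr (Or.inl ⟨b * r, by rw [mul_assoc]⟩))
  · exact Or.inr (Or.inr (Or.inr ⟨a, b * r, by simp only [mul_assoc]⟩))

private lemma genT_x_mul {x : R} (h1 : ∀ z, x * z * x = 0) (h2 : x * x = 0)
    {t : R} (ht : t ∈ genT x) : x * t = 0 := by
  rcases ht with rfl | ⟨a, rfl⟩ | ⟨b, rfl⟩ | ⟨a, b, rfl⟩
  · exact h2
  · rw [← mul_assoc]; exact h1 a
  · rw [← mul_assoc, h2, zero_mul]
  · rw [← mul_assoc, ← mul_assoc, h1 a, zero_mul]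

private lemma genT_mul {x : R} (h1 : ∀ z, x * z * x = 0) (h2 : x * x = 0)
    {t₁ t₂ : R} (h₁ : t₁ ∈ genT x) (h₂ : t₂ ∈ genT x) : t₁ * t₂ = 0 := by
  rcases h₁ with rfl | ⟨a, rfl⟩ | ⟨b, rfl⟩ | ⟨a, b, rfl⟩
  · exact genT_x_mul h1 h2 h₂
  · rw [mul_assoc, genT_x_mul h1 h2 h₂, mul_zero]
  · rw [mul_assoc]; exact genT_x_mul h1 h2 (genT_mul_left b h₂)
  · rw [mul_assoc, mul_assoc, genT_x_mul h1 h2 (genT_mul_left b h₂), mul_zero]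

/-- The subgroup of elements annihilated on the left by `a`. -/
private def rAnn (a : R) : AddSubgroup R where
  carrier := {c | a * c = 0}
  zero_mem' := mul_zero a
  add_mem' := by
    intro p q hp hq
    simp only [Set.mem_setOf_eq] at *
    rw [mul_add, hp, hq, add_zero]
  neg_mem' := by
    intro p hp
    simp only [Set.mem_setOf_eq] at *
    rw [mul_neg, hp, neg_zero]

private lemma closure_mul_closure_zero {x : R} (h1 : ∀ z, x * z * x = 0)
    (h2 : x * x = 0) :
    ∀ a ∈ AddSubgroup.closure (genT x), ∀ c ∈ AddSubgroup.closure (genT x),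
      a * c = 0 := by
  have step1 : ∀ t ∈ genT x, ∀ c ∈ AddSubgroup.closure (genT x), t * c = 0 := by
    intro t ht c hc
    exact (AddSubgroup.closure_le (rAnn t)).mpr
      (fun u hu => show u ∈ rAnn t from genT_mul h1 h2 ht hu) hc
  intro a ha
  let K : AddSubgroup R :=
    { carrier := {a | ∀ c ∈ AddSubgroup.closure (genT x), a * c = 0}
      zero_mem' := fun c _ => zero_mul c
      add_mem' := by
        intro p q hp hq c hc
        rw [add_mul, hp c hc, hq c hc, add_zero]
      neg_mem' := by
        intro p hp c hc
        rw [neg_mul, hp c hc, neg_zero] }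
  exact (AddSubgroup.closure_le K).mpr (fun u hu => show u ∈ K from step1 u hu) ha

/-- The set {y | r * y ∈ closure (genT x)} is an additive subgroup. -/
private lemma mul_left_mem_closure {x : R} (r : R) {y : R}
    (hy : y ∈ AddSubgroup.closure (genT x)) :
    r * y ∈ AddSubgroup.closure (genT x) := by
  let K : AddSubgroup R :=
    { carrier := {y | r * y ∈ AddSubgroup.closure (genT x)}
      zero_mem' := by
        show r * 0 ∈ AddSubgroup.closure (genT x)
        rw [mul_zero]; exact AddSubgroup.zero_mem _
      add_mem' := by
        intro p q hp hq
        show r * (p + q) ∈ AddSubgroup.closure (genT x)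
        rw [mul_add]; exact AddSubgroup.add_mem _ hp hq
      neg_mem' := by
        intro p hp
        show r * (-p) ∈ AddSubgroup.closure (genT x)
        rw [mul_neg]; exact AddSubgroup.neg_mem _ hp }
  exact (AddSubgroup.closure_le K).mpr
    (fun u hu => show u ∈ K from AddSubgroup.subset_closure (genT_mul_left r hu)) hy

private lemma mul_right_mem_closure {x : R} (r : R) {y : R}
    (hy : y ∈ AddSubgroup.closure (genT x)) :
    y * r ∈ AddSubgroup.closure (genT x) := by
  let K : AddSubgroup R :=
    { carrier := {y | y * r ∈ AddSubgroup.closure (genT x)}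
      zero_mem' := by
        show 0 * r ∈ AddSubgroup.closure (genT x)
        rw [zero_mul]; exact AddSubgroup.zero_mem _
      add_mem' := by
        intro p q hp hq
        show (p + q) * r ∈ AddSubgroup.closure (genT x)
        rw [add_mul]; exact AddSubgroup.add_mem _ hp hq
      neg_mem' := by
        intro p hp
        show (-p) * r ∈ AddSubgroup.closure (genT x)
        rw [neg_mul]; exact AddSubgroup.neg_mem _ hp }
  exact (AddSubgroup.closure_le K).mpr
    (fun u hu => show u ∈ K from AddSubgroup.subset_closure (genT_mul_right r hu)) hy

private lemma eq_zero_aux (hA : IsSemiprimeRing R) {x : R}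
    (h1 : ∀ z, x * z * x = 0) (h2 : x * x = 0) : x = 0 := by
  let C : TwoSidedIdeal R :=
    TwoSidedIdeal.mk' (AddSubgroup.closure (genT x) : Set R)
      (AddSubgroup.zero_mem _)
      (fun hp hq => AddSubgroup.add_mem _ hp hq)
      (fun hp => AddSubgroup.neg_mem _ hp)
      (fun {r y} hy => mul_left_mem_closure r hy)
      (fun {y r} hy => mul_right_mem_closure r hy)
  have hmem : ∀ y : R, y ∈ C ↔ y ∈ AddSubgroup.closure (genT x) :=
    TwoSidedIdeal.mem_mk' _ _ _ _ _ _
  have hC : C = ⊥ := by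
    refine hA C fun p hp q hq => ?_
    exact closure_mul_closure_zero h1 h2 p ((hmem p).mp hp) q ((hmem q).mp hq)
  have hxC : x ∈ C := (hmem x).mpr (AddSubgroup.subset_closure (genT_self x))
  rw [hC] at hxC
  exact hxC

/-- In a semiprime ring, `x R x = 0` implies `x = 0`. -/
private lemma eq_zero_of_sandwich (hA : IsSemiprimeRing R) {x : R}
    (h1 : ∀ z, x * z * x = 0) : x = 0 := by
  have h2 : x * x = 0 := by
    refine eq_zero_aux hA (x := x * x) (fun z => ?_) ?_
    · rw [mul_assoc x x z, mul_assoc x (x * z) (x * x), ← mul_assoc (x * z) x x,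
        h1 z, zero_mul, mul_zero]
    · rw [← mul_assoc, h1 x, zero_mul]
  exact eq_zero_aux hA h1 h2

end SemiprimeAux

/-- **Proposition 3.1.** If the generalized matrix ring `A` is semiprime, then
for all `s, t ∈ I` the `A_{ts}`-ring `A_{st}` is semiprime: every ideal
`B_{st}` of the `A_{ts}`-ring `A_{st}` with `B_{st}·A_{ts}·B_{st} = 0` is
zero. -/
theorem gammaRing_semiprime_of_gmRing_semiprime {I : Type u}
    (S : GammaSystem.{u, v} I) (hA : IsSemiprimeRing (GMRing S)) :
    ∀ (s t : I) (B : GammaIdeal S s t),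
      (∀ b ∈ B.carrier, ∀ u : S.A t s, ∀ b' ∈ B.carrier,
        S.mul (S.mul b u) b' = 0) →
      B.carrier = ⊥ := by
  classical
  intro s t B hB0
  rw [AddSubgroup.eq_bot_iff_forall]
  intro b hb
  have h1 : ∀ z : GMRing S,
      DFinsupp.single ((s, t) : I × I) b * z * DFinsupp.single ((s, t) : I × I) b
        = 0 := by
    intro z
    induction z using DFinsupp.induction with
    | h0 => rw [mul_zero, zero_mul]
    | ha q c f hf hc ih =>
      rw [mul_add, add_mul, ih, add_zero]
      obtain ⟨q1, q2⟩ := q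
      show S.gmul (S.gmul (DFinsupp.single ((s, t) : I × I) b)
        (DFinsupp.single ((q1, q2) : I × I) c)) (DFinsupp.single ((s, t) : I × I) b) = 0
      rw [S.gmul_single_single (s, t) (q1, q2) b c]
      by_cases h : t = q1
      · subst h
        rw [dif_pos rfl,
          show (cast (congrArg (fun u => S.A u q2) (Eq.symm rfl)) c) = c from rfl,
          S.gmul_single_single (s, q2) (s, t) (S.mul b c) b]
        by_cases h2 : q2 = s
        · subst h2
          rw [dif_pos rfl,
            show (cast (congrArg (fun u => S.A u t) (Eq.symm rfl)) b) = b from rfl,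
            hB0 b hb c b hb, DFinsupp.single_zero]
        · rw [dif_neg h2]
      · rw [dif_neg h, S.zero_gmul]
  have hgen : ∀ x : GMRing S, (∀ z, x * z * x = 0) → x = 0 := fun x hx =>
    eq_zero_of_sandwich hA hx
  have hx := hgen _ h1
  have := DFunLike.congr_fun hx ((s, t) : I × I)
  simpa using this
end

section
/- Let A = Σ{A_{ij} | i,j ∈ I} be the generalized matrix ring of a Γ_I-system. If the ring A is prime, then for all i,j ∈ I the A_{ji}-ring A_{ij} is prime: for all ideals B and C of the A_{ji}-ring A_{ij}, B·A_{ji}·C = 0 implies B = 0 or C = 0. -/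
/-!
Generalized matrix rings (g.m.rings) of a `Γ_I`-system, their g.m.ideals,
g.m.homomorphisms, quotients, and the general theory of radicals,
following Zhang, "The Baer radical of generalized matrix rings".
-/

universe u v w

set_option autoImplicit false
set_option maxHeartbeats 1000000

variable {I : Type u}

section AuxIdeal

variable {R : Type w} [NonUnitalRing R]

/-- The two-sided ideal whose carrier is the additive closure of a set `T`
which is already closed (into the additive closure) under left and right
multiplications by ring elements. -/
def closureIdeal (T : Set R)
    (hl : ∀ (x : R), ∀ t ∈ T, x * t ∈ AddSubgroup.closure T)
    (hr : ∀ t ∈ T, ∀ (x : R), t * x ∈ AddSubgroup.closure T) : TwoSidedIdeal R :=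
  TwoSidedIdeal.mk' {x | x ∈ AddSubgroup.closure T}
    ((AddSubgroup.closure T).zero_mem)
    (fun hx hy => (AddSubgroup.closure T).add_mem hx hy)
    (fun hx => (AddSubgroup.closure T).neg_mem hx)
    (fun {x y} hy => by
      show x * y ∈ AddSubgroup.closure T
      refine AddSubgroup.closure_induction (fun t ht => hl x t ht) ?_ ?_ ?_ hy
      · rw [mul_zero]; exact (AddSubgroup.closure T).zero_mem
      · intro a b _ _ ha hb
        rw [mul_add]; exact (AddSubgroup.closure T).add_mem ha hb
      · intro a _ ha
        rw [mul_neg]; exact (AddSubgroup.closure T).neg_mem ha)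
    (fun {x y} hx => by
      show x * y ∈ AddSubgroup.closure T
      refine AddSubgroup.closure_induction (fun t ht => hr t ht y) ?_ ?_ ?_ hx
      · rw [zero_mul]; exact (AddSubgroup.closure T).zero_mem
      · intro a b _ _ ha hb
        rw [add_mul]; exact (AddSubgroup.closure T).add_mem ha hb
      · intro a _ ha
        rw [neg_mul]; exact (AddSubgroup.closure T).neg_mem ha)

lemma mem_closureIdeal {T : Set R} {hl hr} {x : R} :
    x ∈ closureIdeal T hl hr ↔ x ∈ AddSubgroup.closure T :=
  TwoSidedIdeal.mem_mk' {x | x ∈ AddSubgroup.closure T} _ _ _ _ _ x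

lemma closure_mul_closure_eq_zero {T U : Set R}
    (h : ∀ t ∈ T, ∀ u ∈ U, t * u = 0) :
    ∀ x ∈ AddSubgroup.closure T, ∀ y ∈ AddSubgroup.closure U, x * y = 0 := by
  intro x hx
  refine AddSubgroup.closure_induction ?_ ?_ ?_ ?_ hx
  · intro t ht y hy
    refine AddSubgroup.closure_induction (fun u hu => h t ht u hu) ?_ ?_ ?_ hy
    · exact mul_zero t
    · intro a b _ _ ha hb; rw [mul_add, ha, hb, add_zero]
    · intro a _ ha; rw [mul_neg, ha, neg_zero]
  · intro y _; exact zero_mul y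
  · intro a b _ _ ha hb y hy; rw [add_mul, ha y hy, hb y hy, add_zero]
  · intro a _ ha y hy; rw [neg_mul, ha y hy, neg_zero]

end AuxIdeal

section PrimeAux

variable {R : Type w} [NonUnitalRing R]

/-- In a prime (possibly non-unital) ring, `X R Y = 0` implies `X = 0` or `Y = 0`. -/
lemma prime_aux (hA : IsPrimeRing R) (X Y : R)
    (K1 : ∀ z : R, X * z * Y = 0) : X = 0 ∨ Y = 0 := by
  classical
  -- the two-sided ideal generated by X
  set TB : Set R := {w | w = X ∨ (∃ a, w = X * a) ∨ (∃ a, w = a * X) ∨ ∃ a v, w = a * X * v}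
    with hTB
  have hTBl : ∀ (x : R), ∀ t ∈ TB, x * t ∈ TB := by
    rintro x t (rfl | ⟨a, rfl⟩ | ⟨a, rfl⟩ | ⟨a, v, rfl⟩)
    · exact Or.inr (Or.inr (Or.inl ⟨x, rfl⟩))
    · exact Or.inr (Or.inr (Or.inr ⟨x, a, (mul_assoc x X a).symm⟩))
    · exact Or.inr (Or.inr (Or.inl ⟨x * a, (mul_assoc x a X).symm⟩))
    · refine Or.inr (Or.inr (Or.inr ⟨x * a, v, ?_⟩))
      rw [mul_assoc x a X, ← mul_assoc x (a * X) v]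
  have hTBr : ∀ t ∈ TB, ∀ (x : R), t * x ∈ TB := by
    rintro t (rfl | ⟨a, rfl⟩ | ⟨a, rfl⟩ | ⟨a, v, rfl⟩) x
    · exact Or.inr (Or.inl ⟨x, rfl⟩)
    · exact Or.inr (Or.inl ⟨a * x, (mul_assoc X a x)⟩)
    · exact Or.inr (Or.inr (Or.inr ⟨a, x, rfl⟩))
    · exact Or.inr (Or.inr (Or.inr ⟨a, v * x, (mul_assoc (a * X) v x)⟩))
  -- the two-sided ideal generated by `R·Y + R·Y·R`
  set TC : Set R := {w | (∃ z, w = z * Y) ∨ ∃ z v, w = z * Y * v} with hTC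
  have hTCl : ∀ (x : R), ∀ t ∈ TC, x * t ∈ TC := by
    rintro x t (⟨z, rfl⟩ | ⟨z, v, rfl⟩)
    · exact Or.inl ⟨x * z, (mul_assoc x z Y).symm⟩
    · refine Or.inr ⟨x * z, v, ?_⟩
      rw [mul_assoc x z Y, ← mul_assoc x (z * Y) v]
  have hTCr : ∀ t ∈ TC, ∀ (x : R), t * x ∈ TC := by
    rintro t (⟨z, rfl⟩ | ⟨z, v, rfl⟩) x
    · exact Or.inr ⟨z, x, rfl⟩
    · exact Or.inr ⟨z, v * x, (mul_assoc (z * Y) v x)⟩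
  have LX : ∀ u ∈ TC, X * u = 0 := by
    rintro u (⟨z, rfl⟩ | ⟨z, v, rfl⟩)
    · rw [← mul_assoc]; exact K1 z
    · rw [← mul_assoc, ← mul_assoc, K1 z, zero_mul]
  have hprod : ∀ t ∈ TB, ∀ u ∈ TC, t * u = 0 := by
    rintro t (rfl | ⟨a, rfl⟩ | ⟨a, rfl⟩ | ⟨a, v, rfl⟩) u hu
    · exact LX u hu
    · rw [mul_assoc]; exact LX _ (hTCl a u hu)
    · rw [mul_assoc, LX u hu, mul_zero]
    · rw [mul_assoc (a * X) v u, mul_assoc a X (v * u), LX _ (hTCl v u hu), mul_zero]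
  have hIB := fun x t ht => AddSubgroup.subset_closure (hTBl x t ht)
  have hIBr := fun t ht x => AddSubgroup.subset_closure (hTBr t ht x)
  have hIC := fun x t ht => AddSubgroup.subset_closure (hTCl x t ht)
  have hICr := fun t ht x => AddSubgroup.subset_closure (hTCr t ht x)
  rcases hA (closureIdeal TB hIB hIBr) (closureIdeal TC hIC hICr)
      (fun x hx y hy => closure_mul_closure_eq_zero hprod x
        (mem_closureIdeal.mp hx) y (mem_closureIdeal.mp hy)) with hbot | hbot
  · left
    have hXmem : X ∈ closureIdeal TB hIB hIBr :=
      mem_closureIdeal.mpr (AddSubgroup.subset_closure (Or.inl rfl))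
    rw [hbot] at hXmem
    simpa using hXmem
  · -- `R·Y = 0`; now the ideal generated by `Y` squares to zero
    right
    have hzY : ∀ z : R, z * Y = 0 := by
      intro z
      have : z * Y ∈ closureIdeal TC hIC hICr :=
        mem_closureIdeal.mpr (AddSubgroup.subset_closure (Or.inl ⟨z, rfl⟩))
      rw [hbot] at this
      simpa using this
    set TD : Set R := {w | w = Y ∨ ∃ a, w = Y * a} with hTD
    have hTDl : ∀ (x : R), ∀ t ∈ TD, x * t ∈ TD := by
      rintro x t (rfl | ⟨a, rfl⟩)
      · exact Or.inr ⟨0, by rw [hzY x, mul_zero]⟩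
      · exact Or.inr ⟨0, by rw [← mul_assoc, hzY x, zero_mul, mul_zero]⟩
    have hTDr : ∀ t ∈ TD, ∀ (x : R), t * x ∈ TD := by
      rintro t (rfl | ⟨a, rfl⟩) x
      · exact Or.inr ⟨x, rfl⟩
      · exact Or.inr ⟨a * x, (mul_assoc Y a x)⟩
    have hprodD : ∀ (t : R), ∀ u ∈ TD, t * u = 0 := by
      rintro t u (rfl | ⟨a', rfl⟩)
      · exact hzY t
      · rw [← mul_assoc, hzY t, zero_mul]
    have hID := fun x t ht => AddSubgroup.subset_closure (hTDl x t ht)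
    have hIDr := fun t ht x => AddSubgroup.subset_closure (hTDr t ht x)
    have hYmem : Y ∈ closureIdeal TD hID hIDr :=
      mem_closureIdeal.mpr (AddSubgroup.subset_closure (Or.inl rfl))
    rcases hA (closureIdeal TD hID hIDr) (closureIdeal TD hID hIDr)
        (fun x hx y hy => closure_mul_closure_eq_zero (fun t _ u hu => hprodD t u hu) x
          (mem_closureIdeal.mp hx) y (mem_closureIdeal.mp hy)) with hbot2 | hbot2 <;>
    · rw [hbot2] at hYmem
      simpa using hYmem

end PrimeAux

/-- **Proposition 3.2.** If the generalized matrix ring `A` is prime, then for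
all `i, j ∈ I` the `A_{ji}`-ring `A_{ij}` is prime: for all ideals `B, C` of
the `A_{ji}`-ring `A_{ij}`, `B·A_{ji}·C = 0` implies `B = 0` or `C = 0`. -/
theorem gammaRing_prime_of_gmRing_prime {I : Type u}
    (S : GammaSystem.{u, v} I) (hA : IsPrimeRing (GMRing S)) :
    ∀ (i j : I) (B C : GammaIdeal S i j),
      (∀ b ∈ B.carrier, ∀ u : S.A j i, ∀ c ∈ C.carrier,
        S.mul (S.mul b u) c = 0) →
      B.carrier = ⊥ ∨ C.carrier = ⊥ := by
  classical
  intro i j B C hBC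
  by_contra hcon
  push_neg at hcon
  obtain ⟨hB, hC⟩ := hcon
  obtain ⟨b, hb, hb0⟩ : ∃ b ∈ B.carrier, b ≠ 0 := by
    by_contra h
    push_neg at h
    exact hB ((AddSubgroup.eq_bot_iff_forall _).mpr h)
  obtain ⟨c, hc, hc0⟩ : ∃ c ∈ C.carrier, c ≠ 0 := by
    by_contra h
    push_neg at h
    exact hC ((AddSubgroup.eq_bot_iff_forall _).mpr h)
  have K1 : ∀ z : GMRing S,
      (DFinsupp.single ((i, j) : I × I) b) * z * (DFinsupp.single ((i, j) : I × I) c) = 0 := by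
    intro z
    show S.gmul (S.gmul (DFinsupp.single ((i, j) : I × I) b) z)
      (DFinsupp.single ((i, j) : I × I) c) = 0
    induction z using DFinsupp.induction with
    | h0 => rw [S.gmul_zero, S.zero_gmul]
    | ha q a f hf haa ih =>
      rw [S.gmul_add, S.add_gmul, ih, add_zero]
      obtain ⟨q1, q2⟩ := q
      by_cases h1 : j = q1
      · subst h1
        rw [S.gmul_single_single (i, j) (j, q2) b a, dif_pos rfl]
        by_cases h2 : q2 = i
        · subst h2
          rw [S.gmul_single_single (q2, q2) (q2, j) _ c, dif_pos rfl]
          rw [show (cast (congrArg (fun t => S.A t q2) (Eq.symm rfl)) a) = a from rfl,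
            show (cast (congrArg (fun t => S.A t j) (Eq.symm rfl)) c) = c from rfl,
            hBC b hb a c hc]
          exact DFinsupp.single_zero _
        · rw [S.gmul_single_single (i, q2) (i, j) _ c, dif_neg h2]
      · rw [S.gmul_single_single (i, j) (q1, q2) b a, dif_neg h1, S.zero_gmul]
  rcases prime_aux hA (DFinsupp.single ((i, j) : I × I) b)
      (DFinsupp.single ((i, j) : I × I) c) K1 with h | h
  · exact hb0 ((DFinsupp.single_eq_zero (β := fun p : I × I => S.A p.1 p.2)
      (i := ((i, j) : I × I)) (xi := b)).mp h)
  · exact hc0 ((DFinsupp.single_eq_zero (β := fun p : I × I => S.A p.1 p.2)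
      (i := ((i, j) : I × I)) (xi := c)).mp h)
end

section
/- Let r be a radical property of rings. Define a property g.m.r of g.m.rings by: a g.m.ring A is a g.m.r-g.m.ring if and only if the ring A is an r-ring. Then g.m.r is a radical property of g.m.rings, and for every g.m.ring A, the g.m.r-radical g.m.r(A) is the largest g.m.ideal N of A such that the ring N is an r-ring. -/
/-!
Generalized matrix rings (g.m.rings) of a `Γ_I`-system, their g.m.ideals,
g.m.homomorphisms, quotients, and the general theory of radicals,
following Zhang, "The Baer radical of generalized matrix rings".
-/

universe u v w

set_option autoImplicit false
set_option maxHeartbeats 1000000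

variable {I : Type u}

/-! ### Auxiliary development for Theorem 2.4 -/

section AuxDev

open Classical

variable {I' : Type u}

namespace GMHom

variable {S T : GammaSystem.{u, v} I'}

lemma map_zero' (ψ : GMHom S T) {i j : I'} : ψ.f i j 0 = 0 := by
  have h := ψ.map_add (0 : S.A i j) 0
  rw [add_zero] at h
  exact (add_eq_left.mp h.symm)

/-- The ring map on generalized matrix rings induced by a g.m.homomorphism. -/
noncomputable def rmap (ψ : GMHom S T) (x : GMRing S) : GMRing T :=
  DFinsupp.mapRange (fun p a => ψ.f p.1 p.2 a) (fun _ => ψ.map_zero') x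

lemma rmap_apply (ψ : GMHom S T) (x : GMRing S) (p : I' × I') :
    ψ.rmap x p = ψ.f p.1 p.2 (x p) :=
  DFinsupp.mapRange_apply _ _ x p

lemma rmap_zero (ψ : GMHom S T) : ψ.rmap 0 = 0 :=
  DFinsupp.mapRange_zero _ _

lemma rmap_add (ψ : GMHom S T) (x y : GMRing S) :
    ψ.rmap (x + y) = ψ.rmap x + ψ.rmap y := by
  refine DFinsupp.ext fun p => ?_
  rw [rmap_apply, DFinsupp.add_apply, DFinsupp.add_apply, rmap_apply, rmap_apply, ψ.map_add]

lemma rmap_single (ψ : GMHom S T) (p : I' × I') (a : S.A p.1 p.2) :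
    ψ.rmap (DFinsupp.single p a) = DFinsupp.single p (ψ.f p.1 p.2 a) :=
  DFinsupp.mapRange_single

lemma rmap_single_single (ψ : GMHom S T) (p q : I' × I') (a : S.A p.1 p.2) (b : S.A q.1 q.2) :
    ψ.rmap (S.gmul (DFinsupp.single p a) (DFinsupp.single q b)) =
      T.gmul (DFinsupp.single p (ψ.f p.1 p.2 a)) (DFinsupp.single q (ψ.f q.1 q.2 b)) := by
  obtain ⟨p1, p2⟩ := p; obtain ⟨q1, q2⟩ := q
  rw [S.gmul_single_single, T.gmul_single_single]
  by_cases h : p2 = q1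
  · subst h
    rw [dif_pos rfl, dif_pos rfl, rmap_single]
    exact congrArg _ (ψ.map_mul a b)
  · rw [dif_neg h, dif_neg h, rmap_zero]

lemma rmap_gmul_single (ψ : GMHom S T) (p : I' × I') (a : S.A p.1 p.2) (y : GMRing S) :
    ψ.rmap (S.gmul (DFinsupp.single p a) y) =
      T.gmul (DFinsupp.single p (ψ.f p.1 p.2 a)) (ψ.rmap y) := by
  induction y using DFinsupp.induction with
  | h0 => rw [S.gmul_zero, rmap_zero, T.gmul_zero]
  | ha q b f hf hb ih =>
      rw [S.gmul_add, rmap_add, rmap_add, T.gmul_add, ih, rmap_single, rmap_single_single]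

lemma rmap_gmul (ψ : GMHom S T) (x y : GMRing S) :
    ψ.rmap (S.gmul x y) = T.gmul (ψ.rmap x) (ψ.rmap y) := by
  induction x using DFinsupp.induction with
  | h0 => rw [S.zero_gmul, rmap_zero, T.zero_gmul]
  | ha p a f hf ha ih =>
      rw [S.add_gmul, rmap_add, rmap_add, T.add_gmul, ih, rmap_gmul_single, rmap_single]

/-- The induced non-unital ring homomorphism on the generalized matrix rings. -/
noncomputable def toRingHom (ψ : GMHom S T) : GMRing S →ₙ+* GMRing T where
  toFun := ψ.rmap
  map_add' := ψ.rmap_add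
  map_zero' := ψ.rmap_zero
  map_mul' := ψ.rmap_gmul

lemma toRingHom_apply (ψ : GMHom S T) (x : GMRing S) : ψ.toRingHom x = ψ.rmap x := rfl

lemma toRingHom_surjective (ψ : GMHom S T) (h : ψ.Surjective) :
    Function.Surjective ψ.toRingHom := by
  intro y
  induction y using DFinsupp.induction with
  | h0 => exact ⟨0, ψ.rmap_zero⟩
  | ha q b f hf hb ih =>
      obtain ⟨x, hx⟩ := ih
      obtain ⟨a, ha⟩ := h q.1 q.2 b
      refine ⟨DFinsupp.single q a + x, ?_⟩
      rw [toRingHom_apply] at hx ⊢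
      rw [ψ.rmap_add, ψ.rmap_single, ha, hx]

end GMHom

namespace GMIdeal

variable {S : GammaSystem.{u, v} I'}

lemma single_apply_mem (M : GMIdeal S) {p : I' × I'} {a : S.A p.1 p.2}
    (ha : a ∈ M.B p.1 p.2) (t : I' × I') :
    (DFinsupp.single p a : GMRing S) t ∈ M.B t.1 t.2 := by
  rw [DFinsupp.single_apply]
  split
  · next h => subst h; exact ha
  · exact zero_mem _

lemma mem_single_gmul_single_right (M : GMIdeal S) (p q : I' × I') (a : S.A p.1 p.2)
    {b : S.A q.1 q.2} (hb : b ∈ M.B q.1 q.2) (t : I' × I') :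
    (S.gmul (DFinsupp.single p a) (DFinsupp.single q b)) t ∈ M.B t.1 t.2 := by
  obtain ⟨p1, p2⟩ := p; obtain ⟨q1, q2⟩ := q
  rw [S.gmul_single_single]
  by_cases h : p2 = q1
  · subst h
    rw [dif_pos rfl]
    exact M.single_apply_mem (M.mul_mem_left a b hb) t
  · rw [dif_neg h, DFinsupp.zero_apply]
    exact zero_mem _

lemma mem_single_gmul_single_left (M : GMIdeal S) (p q : I' × I') {a : S.A p.1 p.2}
    (ha : a ∈ M.B p.1 p.2) (b : S.A q.1 q.2) (t : I' × I') :
    (S.gmul (DFinsupp.single p a) (DFinsupp.single q b)) t ∈ M.B t.1 t.2 := by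
  obtain ⟨p1, p2⟩ := p; obtain ⟨q1, q2⟩ := q
  rw [S.gmul_single_single]
  by_cases h : p2 = q1
  · subst h
    rw [dif_pos rfl]
    exact M.single_apply_mem (M.mul_mem_right a b ha) t
  · rw [dif_neg h, DFinsupp.zero_apply]
    exact zero_mem _

lemma mem_gmul_single_right (M : GMIdeal S) (x : GMRing S) (q : I' × I')
    {b : S.A q.1 q.2} (hb : b ∈ M.B q.1 q.2) (t : I' × I') :
    (S.gmul x (DFinsupp.single q b)) t ∈ M.B t.1 t.2 := by
  induction x using DFinsupp.induction with
  | h0 => rw [S.zero_gmul, DFinsupp.zero_apply]; exact zero_mem _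
  | ha p a f hf ha ih =>
      rw [S.add_gmul, DFinsupp.add_apply]
      exact add_mem (M.mem_single_gmul_single_right p q a hb t) ih

lemma mem_single_gmul_left (M : GMIdeal S) (p : I' × I') {a : S.A p.1 p.2}
    (ha : a ∈ M.B p.1 p.2) (y : GMRing S) (t : I' × I') :
    (S.gmul (DFinsupp.single p a) y) t ∈ M.B t.1 t.2 := by
  induction y using DFinsupp.induction with
  | h0 => rw [S.gmul_zero, DFinsupp.zero_apply]; exact zero_mem _
  | ha q b f hf hb ih =>
      rw [S.gmul_add, DFinsupp.add_apply]
      exact add_mem (M.mem_single_gmul_single_left p q ha b t) ih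

lemma mem_gmul_right (M : GMIdeal S) (x y : GMRing S) :
    (∀ p, y p ∈ M.B p.1 p.2) → ∀ t, (S.gmul x y) t ∈ M.B t.1 t.2 := by
  induction y using DFinsupp.induction with
  | h0 =>
      intro _ t
      rw [S.gmul_zero, DFinsupp.zero_apply]
      exact zero_mem _
  | ha q b f hf hb ih =>
      intro hy t
      have hb' : b ∈ M.B q.1 q.2 := by
        have h := hy q
        rwa [DFinsupp.add_apply, DFinsupp.single_eq_same, hf, add_zero] at h
      have hf' : ∀ p, f p ∈ M.B p.1 p.2 := by
        intro p
        by_cases hpq : q = p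
        · subst hpq; rw [hf]; exact zero_mem _
        · have h := hy p
          rwa [DFinsupp.add_apply, DFinsupp.single_eq_of_ne (Ne.symm hpq), zero_add] at h
      rw [S.gmul_add, DFinsupp.add_apply]
      exact add_mem (M.mem_gmul_single_right x q hb' t) (ih hf' t)

lemma mem_gmul_left (M : GMIdeal S) (x y : GMRing S) :
    (∀ p, x p ∈ M.B p.1 p.2) → ∀ t, (S.gmul x y) t ∈ M.B t.1 t.2 := by
  induction x using DFinsupp.induction with
  | h0 =>
      intro _ t
      rw [S.zero_gmul, DFinsupp.zero_apply]
      exact zero_mem _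
  | ha p a f hf ha ih =>
      intro hx t
      have ha' : a ∈ M.B p.1 p.2 := by
        have h := hx p
        rwa [DFinsupp.add_apply, DFinsupp.single_eq_same, hf, add_zero] at h
      have hf' : ∀ q, f q ∈ M.B q.1 q.2 := by
        intro q
        by_cases hpq : p = q
        · subst hpq; rw [hf]; exact zero_mem _
        · have h := hx q
          rwa [DFinsupp.add_apply, DFinsupp.single_eq_of_ne (Ne.symm hpq), zero_add] at h
      rw [S.add_gmul, DFinsupp.add_apply]
      exact add_mem (M.mem_single_gmul_left p ha' y t) (ih hf' t)

/-- The two-sided ideal of the generalized matrix ring determined by a g.m.ideal. -/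
noncomputable def idealOf (M : GMIdeal S) : TwoSidedIdeal (GMRing S) :=
  TwoSidedIdeal.mk' {x : GMRing S | ∀ p, x p ∈ M.B p.1 p.2}
    (fun p => by rw [DFinsupp.zero_apply]; exact zero_mem _)
    (fun {x y} hx hy p => by rw [DFinsupp.add_apply]; exact add_mem (hx p) (hy p))
    (fun {x} hx p => by rw [DFinsupp.neg_apply]; exact neg_mem (hx p))
    (fun {x y} hy p => M.mem_gmul_right x y hy p)
    (fun {x y} hx p => M.mem_gmul_left x y hx p)

lemma mem_idealOf {M : GMIdeal S} {x : GMRing S} :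
    x ∈ M.idealOf ↔ ∀ p, x p ∈ M.B p.1 p.2 :=
  TwoSidedIdeal.mem_mk' _ _ _ _ _ _ _

/-- The inclusion of a g.m.ideal into the ambient system, as a g.m.homomorphism. -/
def inclGMHom (M : GMIdeal S) : GMHom M.toSystem S where
  f _ _ a := a.1
  map_add _ _ := rfl
  map_mul _ _ := rfl

/-- The ring of a g.m.ideal maps onto the corresponding two-sided ideal. -/
noncomputable def subIdealHom (M : GMIdeal S) :
    GMRing M.toSystem →ₙ+* M.idealOf where
  toFun x := ⟨M.inclGMHom.rmap x, mem_idealOf.mpr fun p => by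
    rw [GMHom.rmap_apply]; exact (x p).2⟩
  map_add' x y := Subtype.ext (M.inclGMHom.rmap_add x y)
  map_zero' := Subtype.ext (M.inclGMHom.rmap_zero)
  map_mul' x y := Subtype.ext (M.inclGMHom.rmap_gmul x y)

lemma subIdealHom_surjective (M : GMIdeal S) : Function.Surjective M.subIdealHom := by
  rintro ⟨y, hy⟩
  rw [mem_idealOf] at hy
  refine ⟨DFinsupp.mk y.support (fun p => (⟨y p.1, hy p.1⟩ : M.toSystem.A p.1.1 p.1.2)), ?_⟩
  refine Subtype.ext (DFinsupp.ext fun p => ?_)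
  show M.inclGMHom.rmap _ p = y p
  rw [GMHom.rmap_apply]
  erw [DFinsupp.mk_apply]
  by_cases h : p ∈ y.support
  · erw [dif_pos h]; exact rfl
  · erw [dif_neg h]
    exact (DFinsupp.notMem_support_iff.mp h).symm

/-- Restrict a smaller g.m.ideal `M` to a g.m.ideal of the system of `N`. -/
def restrictTo (M N : GMIdeal S) (h : ∀ i j, M.B i j ≤ N.B i j) : GMIdeal N.toSystem where
  B i j := (M.B i j).comap (N.B i j).subtype
  mul_mem_right x z hx :=
    AddSubgroup.mem_comap.mpr (M.mul_mem_right x.1 z.1 (AddSubgroup.mem_comap.mp hx))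
  mul_mem_left x z hz :=
    AddSubgroup.mem_comap.mpr (M.mul_mem_left x.1 z.1 (AddSubgroup.mem_comap.mp hz))

/-- The canonical g.m.homomorphism from `M` to its restriction inside `N`. -/
def restrictGMHom (M N : GMIdeal S) (h : ∀ i j, M.B i j ≤ N.B i j) :
    GMHom M.toSystem (M.restrictTo N h).toSystem where
  f i j a := ⟨⟨a.1, h i j a.2⟩, AddSubgroup.mem_comap.mpr a.2⟩
  map_add _ _ := Subtype.ext (Subtype.ext rfl)
  map_mul _ _ := Subtype.ext (Subtype.ext rfl)

lemma restrictGMHom_surjective (M N : GMIdeal S) (h : ∀ i j, M.B i j ≤ N.B i j) :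
    (M.restrictGMHom N h).Surjective := fun i j y =>
  ⟨⟨y.1.1, AddSubgroup.mem_comap.mp y.2⟩, Subtype.ext (Subtype.ext rfl)⟩

end GMIdeal

section RingLemmas

variable (r : ∀ (R : Type w) [NonUnitalRing R], Prop)

lemma r_of_ideal_top
    (hr1 : ∀ (R S : Type w) [NonUnitalRing R] [NonUnitalRing S] (f : R →ₙ+* S),
      Function.Surjective f → r R → r S)
    (T : Type w) [NonUnitalRing T] (B : TwoSidedIdeal T) (hB : r B)
    (htop : ∀ t, t ∈ B) : r T :=
  hr1 _ _ (NonUnitalSubringClass.subtype B) (fun t => ⟨⟨t, htop t⟩, rfl⟩) hB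

lemma r_ext (hr : IsRingRadicalProperty.{w} r) (T W : Type w)
    [NonUnitalRing T] [NonUnitalRing W] (J : TwoSidedIdeal T) (hJ : r J)
    (f : T →ₙ+* W) (hf : Function.Surjective f) (hker : ∀ t, f t = 0 → t ∈ J)
    (hW : r W) : r T := by
  obtain ⟨B, hB, hmax, hss⟩ := hr.2 T
  have hJB : J ≤ B := hmax J hJ
  have key : ∀ a b : T, f a = f b → (a : B.ringCon.Quotient) = (b : B.ringCon.Quotient) := by
    intro a b hab
    refine (B.ringCon.eq).mpr ((TwoSidedIdeal.rel_iff B a b).mpr (hJB (hker (a - b) ?_)))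
    rw [map_sub, hab, sub_self]
  let s : W → T := Function.surjInv hf
  let g : W →ₙ+* B.ringCon.Quotient :=
  { toFun := fun w => ((s w : T) : B.ringCon.Quotient)
    map_add' := fun w w' => by
      show _ = ((s w : T) : B.ringCon.Quotient) + ((s w' : T) : B.ringCon.Quotient)
      rw [← RingCon.coe_add]
      exact key _ _ (by
        rw [map_add, Function.surjInv_eq hf, Function.surjInv_eq hf, Function.surjInv_eq hf])
    map_zero' := by
      show ((s 0 : T) : B.ringCon.Quotient) = 0
      rw [show (0 : B.ringCon.Quotient) = ((0 : T) : B.ringCon.Quotient) from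
        (RingCon.coe_zero _).symm]
      exact key _ _ (by rw [Function.surjInv_eq hf, map_zero])
    map_mul' := fun w w' => by
      show _ = ((s w : T) : B.ringCon.Quotient) * ((s w' : T) : B.ringCon.Quotient)
      rw [← RingCon.coe_mul]
      exact key _ _ (by
        rw [map_mul, Function.surjInv_eq hf, Function.surjInv_eq hf, Function.surjInv_eq hf]) }
  have hg : Function.Surjective g :=
    fun q => Quotient.inductionOn' q fun t =>
      ⟨f t, key _ _ (Function.surjInv_eq hf (f t))⟩
  have hQ : r B.ringCon.Quotient := hr.1 W _ g hg hW
  have htopr : r ((⊤ : TwoSidedIdeal B.ringCon.Quotient)) := by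
    let h : B.ringCon.Quotient →ₙ+* (⊤ : TwoSidedIdeal B.ringCon.Quotient) :=
    { toFun := fun x => ⟨x, TwoSidedIdeal.mem_top _⟩
      map_add' := fun _ _ => Subtype.ext rfl
      map_zero' := Subtype.ext rfl
      map_mul' := fun _ _ => Subtype.ext rfl }
    exact hr.1 _ _ h (fun y => ⟨y.1, Subtype.ext rfl⟩) hQ
  have hbot := hss ⊤ htopr
  have hBtop : ∀ t : T, t ∈ B := by
    intro t
    have hmem : (t : B.ringCon.Quotient) ∈ (⊥ : TwoSidedIdeal B.ringCon.Quotient) :=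
      hbot ▸ TwoSidedIdeal.mem_top _
    have h0 : (t : B.ringCon.Quotient) = ((0 : T) : B.ringCon.Quotient) := by
      rw [(TwoSidedIdeal.mem_bot _).mp hmem, RingCon.coe_zero]
    exact (B.ringCon.eq).mp h0
  exact r_of_ideal_top r hr.1 T B hB hBtop

end RingLemmas

section GMRadical

variable (r : ∀ (R : Type (max u v)) [NonUnitalRing R], Prop)

/-- The largest g.m.ideal whose ring is an `r`-ring: componentwise supremum of
all g.m.ideals `M` with `r` holding for the ring of `M`. -/
noncomputable def gmRadical (S : GammaSystem.{u, v} I') : GMIdeal S where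
  B i j := ⨆ M : {M : GMIdeal S // r (GMRing M.toSystem)}, M.1.B i j
  mul_mem_right {i j k} x z hx := by
    refine AddSubgroup.iSup_induction (C := fun y => S.mul y z ∈
        ⨆ M : {M : GMIdeal S // r (GMRing M.toSystem)}, M.1.B i k) _ hx
      (fun M y hy => ?_) ?_ (fun y₁ y₂ h₁ h₂ => ?_)
    · exact le_iSup (fun M : {M : GMIdeal S // r (GMRing M.toSystem)} => M.1.B i k) M
        (M.1.mul_mem_right y z hy)
    · show S.mul (0 : S.A i j) z ∈ ⨆ M : {M : GMIdeal S // r (GMRing M.toSystem)}, M.1.B i k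
      rw [S.zero_mul']; exact zero_mem _
    · show S.mul (y₁ + y₂) z ∈ ⨆ M : {M : GMIdeal S // r (GMRing M.toSystem)}, M.1.B i k
      rw [S.add_mul]
      exact add_mem h₁ h₂
  mul_mem_left {i j k} x z hz := by
    refine AddSubgroup.iSup_induction (C := fun y => S.mul x y ∈
        ⨆ M : {M : GMIdeal S // r (GMRing M.toSystem)}, M.1.B i k) _ hz
      (fun M y hy => ?_) ?_ (fun y₁ y₂ h₁ h₂ => ?_)
    · exact le_iSup (fun M : {M : GMIdeal S // r (GMRing M.toSystem)} => M.1.B i k) M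
        (M.1.mul_mem_left x y hy)
    · show S.mul x (0 : S.A j k) ∈ ⨆ M : {M : GMIdeal S // r (GMRing M.toSystem)}, M.1.B i k
      rw [S.mul_zero']; exact zero_mem _
    · show S.mul x (y₁ + y₂) ∈ ⨆ M : {M : GMIdeal S // r (GMRing M.toSystem)}, M.1.B i k
      rw [S.mul_add]
      exact add_mem h₁ h₂

lemma gmRadical_largest (S : GammaSystem.{u, v} I') (M : GMIdeal S)
    (hM : r (GMRing M.toSystem)) (i j : I') : M.B i j ≤ (gmRadical r S).B i j :=
  le_iSup (fun M' : {M' : GMIdeal S // r (GMRing M'.toSystem)} => M'.1.B i j) ⟨M, hM⟩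

lemma r_of_le_gmRadical (hr : IsRingRadicalProperty.{max u v} r)
    {S : GammaSystem.{u, v} I'} (N M : GMIdeal S) (hM : r (GMRing M.toSystem))
    (hle : ∀ i j, M.B i j ≤ N.B i j) : r ((M.restrictTo N hle).idealOf) := by
  refine hr.1 _ _ ((M.restrictTo N hle).subIdealHom.comp
      (M.restrictGMHom N hle).toRingHom) ?_ hM
  rw [NonUnitalRingHom.coe_comp]
  exact Function.Surjective.comp ((M.restrictTo N hle).subIdealHom_surjective)
    ((M.restrictGMHom N hle).toRingHom_surjective (M.restrictGMHom_surjective N hle))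

lemma gmRadical_spec (hr : IsRingRadicalProperty.{max u v} r) (S : GammaSystem.{u, v} I') :
    r (GMRing (gmRadical r S).toSystem) := by
  obtain ⟨B, hB, hmax, _⟩ := hr.2 (GMRing (gmRadical r S).toSystem)
  have hsingle : ∀ (p : I' × I') (a : S.A p.1 p.2), a ∈ (gmRadical r S).B p.1 p.2 →
      ∃ ha : a ∈ (gmRadical r S).B p.1 p.2,
      (DFinsupp.single p (⟨a, ha⟩ : (gmRadical r S).toSystem.A p.1 p.2) :
        GMRing (gmRadical r S).toSystem) ∈ B := by
    intro p a ha
    refine AddSubgroup.iSup_induction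
      (C := fun a' => ∃ ha' : a' ∈ (gmRadical r S).B p.1 p.2,
        (DFinsupp.single p (⟨a', ha'⟩ : (gmRadical r S).toSystem.A p.1 p.2) :
          GMRing (gmRadical r S).toSystem) ∈ B)
      _ ha (fun M a' haM => ?_) ?_ (fun x y hx hy => ?_)
    · have hle : ∀ i j, M.1.B i j ≤ (gmRadical r S).B i j :=
        fun i j => gmRadical_largest r S M.1 M.2 i j
      have hC : r ((M.1.restrictTo (gmRadical r S) hle).idealOf) :=
        r_of_le_gmRadical r hr _ _ M.2 hle
      refine ⟨hle p.1 p.2 haM, ?_⟩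
      refine hmax _ hC (GMIdeal.mem_idealOf.mpr
        ((M.1.restrictTo (gmRadical r S) hle).single_apply_mem
          (AddSubgroup.mem_comap.mpr haM)))
    · refine ⟨zero_mem _, ?_⟩
      have h0 : (DFinsupp.single p (0 : (gmRadical r S).toSystem.A p.1 p.2) :
          GMRing (gmRadical r S).toSystem) ∈ B := by
        rw [DFinsupp.single_zero]; exact B.zero_mem
      exact h0
    · obtain ⟨hx', hBx⟩ := hx
      obtain ⟨hy', hBy⟩ := hy
      refine ⟨add_mem hx' hy', ?_⟩
      have hsum := B.add_mem hBx hBy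
      erw [← DFinsupp.single_add] at hsum
      exact hsum
  have htop : ∀ t : GMRing (gmRadical r S).toSystem, t ∈ B := by
    intro t
    induction t using DFinsupp.induction with
    | h0 => exact B.zero_mem
    | ha p a f hf ha ih => exact B.add_mem ((hsingle p a.1 a.2).2) ih
  exact r_of_ideal_top r hr.1 _ B hB htop


lemma gmRadical_quot (hr : IsRingRadicalProperty.{max u v} r) (S : GammaSystem.{u, v} I') :
    ∀ P : GMIdeal (gmRadical r S).quotSystem, r (GMRing P.toSystem) → P.IsZero := by
  intro P hP
  let N := gmRadical r S
  let Q : GMIdeal S :=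
  { B := fun i j => (P.B i j).comap (QuotientAddGroup.mk' (N.B i j))
    mul_mem_right := fun {i j k} x z hx => by
      refine AddSubgroup.mem_comap.mpr ?_
      exact P.mul_mem_right (i := i) (j := j) (k := k)
        ((x : S.A i j) : S.A i j ⧸ N.B i j) ((z : S.A j k) : S.A j k ⧸ N.B j k)
        (AddSubgroup.mem_comap.mp hx)
    mul_mem_left := fun {i j k} x z hz => by
      refine AddSubgroup.mem_comap.mpr ?_
      exact P.mul_mem_left (i := i) (j := j) (k := k)
        ((x : S.A i j) : S.A i j ⧸ N.B i j) ((z : S.A j k) : S.A j k ⧸ N.B j k)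
        (AddSubgroup.mem_comap.mp hz) }
  have hNQ : ∀ i j, N.B i j ≤ Q.B i j := by
    intro i j a ha
    refine AddSubgroup.mem_comap.mpr ?_
    show ((a : S.A i j ⧸ N.B i j)) ∈ P.B i j
    rw [(QuotientAddGroup.eq_zero_iff a).mpr ha]
    exact zero_mem _
  let φ : GMHom Q.toSystem P.toSystem :=
  { f := fun i j a => ⟨((a.1 : S.A i j) : S.A i j ⧸ N.B i j), AddSubgroup.mem_comap.mp a.2⟩
    map_add := fun _ _ => Subtype.ext rfl
    map_mul := fun _ _ => Subtype.ext rfl }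
  have hφ : φ.Surjective := by
    intro i j y
    obtain ⟨a, ha⟩ := QuotientAddGroup.mk'_surjective (N.B i j) y.1
    refine ⟨⟨a, AddSubgroup.mem_comap.mpr ?_⟩, Subtype.ext ha⟩
    show ((a : S.A i j ⧸ N.B i j)) ∈ P.B i j
    rw [show ((a : S.A i j ⧸ N.B i j)) = y.1 from ha]
    exact y.2
  have hJ : r ((N.restrictTo Q hNQ).idealOf) :=
    r_of_le_gmRadical r hr Q N (gmRadical_spec r hr S) hNQ
  have hker : ∀ t : GMRing Q.toSystem, φ.toRingHom t = 0 →
      t ∈ (N.restrictTo Q hNQ).idealOf := by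
    intro t ht
    refine GMIdeal.mem_idealOf.mpr fun p => ?_
    refine AddSubgroup.mem_comap.mpr ?_
    have hcomp : φ.rmap t p = 0 := by
      rw [GMHom.toRingHom_apply] at ht
      rw [ht, DFinsupp.zero_apply]
    rw [GMHom.rmap_apply] at hcomp
    have hval : (((t p).1 : S.A p.1 p.2) : S.A p.1 p.2 ⧸ N.B p.1 p.2) = 0 :=
      congrArg Subtype.val hcomp
    exact (QuotientAddGroup.eq_zero_iff _).mp hval
  have hQr : r (GMRing Q.toSystem) :=
    r_ext r hr _ _ (N.restrictTo Q hNQ).idealOf hJ φ.toRingHom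
      (φ.toRingHom_surjective hφ) hker hP
  intro i j
  refine (AddSubgroup.eq_bot_iff_forall _).mpr fun c hc => ?_
  obtain ⟨a, rfl⟩ := QuotientAddGroup.mk'_surjective (N.B i j) c
  have haQ : a ∈ Q.B i j := AddSubgroup.mem_comap.mpr hc
  have haN : a ∈ N.B i j := gmRadical_largest r S Q hQr i j haQ
  exact (QuotientAddGroup.eq_zero_iff a).mpr haN

end GMRadical

end AuxDev


/-- **Theorem 2.4.** Let `r` be a radical property of rings, and call a
g.m.ring `A` a `g.m.r`-g.m.ring iff the ring `A` is an `r`-ring. Then `g.m.r`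
is a radical property of g.m.rings, and `g.m.r(A)` is the largest g.m.ideal
`N` of `A` such that the ring `N` is an `r`-ring. -/
theorem gmRadicalProperty_of_ringRadicalProperty
    (r : ∀ (R : Type (max u v)) [NonUnitalRing R], Prop)
    (hr : IsRingRadicalProperty r) :
    IsGMRadicalProperty (fun (I₀ : Type u) (S : GammaSystem.{u, v} I₀) =>
      r (GMRing S)) ∧
    ∀ (I : Type u) (S : GammaSystem.{u, v} I), ∃ N : GMIdeal S,
      r (GMRing N.toSystem) ∧
      ∀ M : GMIdeal S, r (GMRing M.toSystem) → ∀ i j : I, M.B i j ≤ N.B i j := by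
  refine ⟨⟨fun I₀ S T ψ hψ hS => hr.1 _ _ ψ.toRingHom (ψ.toRingHom_surjective hψ) hS,
    fun I₀ S => ⟨gmRadical r S, ⟨gmRadical_spec r hr S,
      fun M hM i j => gmRadical_largest r S M hM i j⟩, gmRadical_quot r hr S⟩⟩,
    fun I S => ⟨gmRadical r S, gmRadical_spec r hr S,
      fun M hM i j => gmRadical_largest r S M hM i j⟩⟩
end

section
/- A class r of g.m.rings is a radical property of g.m.rings if and only if the following two conditions hold: (R1') every g.m.homomorphic image of an r-g.m.ring is an r-g.m.ring; (R2') if every non-zero g.m.homomorphic image of a g.m.ring A contains a non-zero r-g.m.ideal, then A is an r-g.m.ring. -/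
/-!
Generalized matrix rings (g.m.rings) of a `Γ_I`-system, their g.m.ideals,
g.m.homomorphisms, quotients, and the general theory of radicals,
following Zhang, "The Baer radical of generalized matrix rings".
-/

universe u v w

set_option autoImplicit false
set_option maxHeartbeats 1000000

variable {I : Type u}

section RadicalProofAux

variable {I : Type u}

namespace GMHom

variable {S T : GammaSystem.{u, v} I} (ψ : GMHom S T)

lemma map_zero'' (i j : I) : ψ.f i j 0 = 0 := by
  have h := ψ.map_add (0 : S.A i j) 0
  rw [add_zero] at h
  exact (add_eq_left.mp h.symm)

lemma map_neg'' (i j : I) (x : S.A i j) : ψ.f i j (-x) = - ψ.f i j x := by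
  have h := ψ.map_add x (-x)
  rw [add_neg_cancel, ψ.map_zero''] at h
  exact (neg_eq_of_add_eq_zero_right h.symm).symm

end GMHom

/-- The whole g.m.ring as a g.m.ideal of itself. -/
def GMIdeal.topIdeal (S : GammaSystem.{u, v} I) : GMIdeal S where
  B _ _ := ⊤
  mul_mem_right _ _ _ := AddSubgroup.mem_top _
  mul_mem_left _ _ _ := AddSubgroup.mem_top _

/-- The obvious map onto the top ideal viewed as a system. -/
def GMHom.toTop (T : GammaSystem.{u, v} I) : GMHom T (GMIdeal.topIdeal T).toSystem where
  f _ _ x := ⟨x, AddSubgroup.mem_top _⟩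
  map_add _ _ := rfl
  map_mul _ _ := rfl

lemma GMHom.toTop_surjective (T : GammaSystem.{u, v} I) : (GMHom.toTop T).Surjective :=
  fun _ _ y => ⟨y.1, Subtype.ext rfl⟩

/-- The inclusion of a g.m.ideal into the ambient system. -/
def GMHom.incl {S : GammaSystem.{u, v} I} (N : GMIdeal S) : GMHom N.toSystem S where
  f _ _ x := x.1
  map_add _ _ := rfl
  map_mul _ _ := rfl

lemma GMHom.incl_surjective {S : GammaSystem.{u, v} I} (N : GMIdeal S)
    (h : ∀ (i j : I) (x : S.A i j), x ∈ N.B i j) : (GMHom.incl N).Surjective :=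
  fun i j x => ⟨⟨x, h i j x⟩, rfl⟩

lemma mk_out {G : Type*} [AddCommGroup G] (N : AddSubgroup G) (x : G ⧸ N) :
    QuotientAddGroup.mk (Quotient.out x) = x := Quotient.out_eq' x

/-- The quotient map as a g.m.homomorphism. -/
def GMHom.quotHom {S : GammaSystem.{u, v} I} (N : GMIdeal S) : GMHom S N.quotSystem where
  f i j x := QuotientAddGroup.mk x
  map_add _ _ := rfl
  map_mul _ _ := rfl

lemma GMHom.quotHom_surjective {S : GammaSystem.{u, v} I} (N : GMIdeal S) :
    (GMHom.quotHom N).Surjective :=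
  fun i j x => ⟨Quotient.out x, mk_out _ x⟩

def GammaSystem.mulRightHom (S : GammaSystem.{u, v} I) {i j k : I} (z : S.A j k) :
    S.A i j →+ S.A i k :=
  AddMonoidHom.mk' (fun y => S.mul y z) (fun a b => S.add_mul a b z)

def GammaSystem.mulLeftHom (S : GammaSystem.{u, v} I) {i j k : I} (x : S.A i j) :
    S.A j k →+ S.A i k :=
  AddMonoidHom.mk' (fun y => S.mul x y) (fun a b => S.mul_add x a b)

/-- Generators of the candidate radical ideal: union of all `r`-g.m.ideals. -/
def radSet (r : ∀ I₀ : Type u, GammaSystem.{u, v} I₀ → Prop) (S : GammaSystem.{u, v} I)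
    (i j : I) : Set (S.A i j) :=
  ⋃ (M : GMIdeal S) (_ : r I M.toSystem), (M.B i j : Set (S.A i j))

/-- The candidate radical ideal: componentwise subgroup generated by all `r`-g.m.ideals. -/
def radIdeal (r : ∀ I₀ : Type u, GammaSystem.{u, v} I₀ → Prop) (S : GammaSystem.{u, v} I) :
    GMIdeal S where
  B i j := AddSubgroup.closure (radSet r S i j)
  mul_mem_right {i j k} x z hx := by
    have hle : AddSubgroup.closure (radSet r S i j) ≤
        (AddSubgroup.closure (radSet r S i k)).comap (S.mulRightHom z) := by
      rw [AddSubgroup.closure_le]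
      intro m hm
      obtain ⟨M, hM, hmM⟩ : ∃ M : GMIdeal S, ∃ _ : r I M.toSystem, m ∈ M.B i j := by
        simpa [radSet] using hm
      exact AddSubgroup.subset_closure
        (Set.mem_iUnion.mpr ⟨M, Set.mem_iUnion.mpr ⟨hM, M.mul_mem_right m z hmM⟩⟩)
    exact hle hx
  mul_mem_left {i j k} x z hz := by
    have hle : AddSubgroup.closure (radSet r S j k) ≤
        (AddSubgroup.closure (radSet r S i k)).comap (S.mulLeftHom x) := by
      rw [AddSubgroup.closure_le]
      intro m hm
      obtain ⟨M, hM, hmM⟩ : ∃ M : GMIdeal S, ∃ _ : r I M.toSystem, m ∈ M.B j k := by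
        simpa [radSet] using hm
      exact AddSubgroup.subset_closure
        (Set.mem_iUnion.mpr ⟨M, Set.mem_iUnion.mpr ⟨hM, M.mul_mem_left x m hmM⟩⟩)
    exact hle hz

lemma le_radIdeal (r : ∀ I₀ : Type u, GammaSystem.{u, v} I₀ → Prop)
    {S : GammaSystem.{u, v} I} (M : GMIdeal S) (hM : r I M.toSystem) (i j : I) :
    M.B i j ≤ (radIdeal r S).B i j := fun m hm =>
  AddSubgroup.subset_closure (Set.mem_iUnion.mpr ⟨M, Set.mem_iUnion.mpr ⟨hM, hm⟩⟩)

/-- Image of a sub-ideal `M ≤ Q` under a surjective g.m.hom out of `Q`. -/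
def imageIdeal {S T : GammaSystem.{u, v} I} (Q M : GMIdeal S)
    (hMQ : ∀ ⦃i j : I⦄ ⦃m : S.A i j⦄, m ∈ M.B i j → m ∈ Q.B i j)
    (ψ : GMHom Q.toSystem T) (hs : ψ.Surjective) : GMIdeal T where
  B i j :=
    { carrier := { t | ∃ m, ∃ hm : m ∈ M.B i j, ψ.f i j ⟨m, hMQ hm⟩ = t }
      zero_mem' := ⟨0, zero_mem _, by
        rw [show (⟨(0 : S.A i j), hMQ (zero_mem _)⟩ : ↥(Q.B i j)) = 0 from rfl]
        exact ψ.map_zero'' i j⟩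
      add_mem' := by
        rintro x y ⟨m, hm, hx⟩ ⟨m', hm', hy⟩
        refine ⟨m + m', add_mem hm hm', ?_⟩
        erw [show (⟨m + m', hMQ (add_mem hm hm')⟩ : ↥(Q.B i j)) =
          ⟨m, hMQ hm⟩ + ⟨m', hMQ hm'⟩ from rfl, ψ.map_add, hx, hy]
      neg_mem' := by
        rintro x ⟨m, hm, hx⟩
        refine ⟨-m, neg_mem hm, ?_⟩
        erw [show (⟨-m, hMQ (neg_mem hm)⟩ : ↥(Q.B i j)) = -⟨m, hMQ hm⟩ from rfl,
          ψ.map_neg'', hx] }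
  mul_mem_right {i j k} x z hx := by
    obtain ⟨m, hm, hψ⟩ := hx
    obtain ⟨q, hq⟩ := hs j k z
    refine ⟨S.mul m q.1, M.mul_mem_right m q.1 hm, ?_⟩
    erw [← hψ, ← hq, ← ψ.map_mul]
    exact congrArg (ψ.f i k) (Subtype.ext rfl)
  mul_mem_left {i j k} x z hz := by
    obtain ⟨m, hm, hψ⟩ := hz
    obtain ⟨q, hq⟩ := hs i j x
    refine ⟨S.mul q.1 m, M.mul_mem_left q.1 m hm, ?_⟩
    erw [← hψ, ← hq, ← ψ.map_mul]
    exact congrArg (ψ.f i k) (Subtype.ext rfl)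

/-- The obvious surjection from `M` onto its image. -/
def imageHom {S T : GammaSystem.{u, v} I} (Q M : GMIdeal S)
    (hMQ : ∀ ⦃i j : I⦄ ⦃m : S.A i j⦄, m ∈ M.B i j → m ∈ Q.B i j)
    (ψ : GMHom Q.toSystem T) (hs : ψ.Surjective) :
    GMHom M.toSystem (imageIdeal Q M hMQ ψ hs).toSystem where
  f i j m := ⟨ψ.f i j ⟨m.1, hMQ m.2⟩, m.1, m.2, rfl⟩
  map_add {i j} x y := Subtype.ext (by
    show ψ.f i j ⟨(x + y).1, hMQ (x + y).2⟩ =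
      ψ.f i j ⟨x.1, hMQ x.2⟩ + ψ.f i j ⟨y.1, hMQ y.2⟩
    erw [show (⟨(x + y).1, hMQ (x + y).2⟩ : ↥(Q.B i j)) =
      ⟨x.1, hMQ x.2⟩ + ⟨y.1, hMQ y.2⟩ from rfl, ψ.map_add])
  map_mul {i j k} x z := Subtype.ext (by
    show ψ.f i k ⟨(M.toSystem.mul x z).1, hMQ (M.toSystem.mul x z).2⟩ =
      T.mul (ψ.f i j ⟨x.1, hMQ x.2⟩) (ψ.f j k ⟨z.1, hMQ z.2⟩)
    erw [← ψ.map_mul]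
    exact congrArg (ψ.f i k) (Subtype.ext rfl))

lemma imageHom_surjective {S T : GammaSystem.{u, v} I} (Q M : GMIdeal S)
    (hMQ : ∀ ⦃i j : I⦄ ⦃m : S.A i j⦄, m ∈ M.B i j → m ∈ Q.B i j)
    (ψ : GMHom Q.toSystem T) (hs : ψ.Surjective) :
    (imageHom Q M hMQ ψ hs).Surjective := by
  intro i j t
  obtain ⟨m, hm, hψ⟩ := t.2
  exact ⟨⟨m, hm⟩, Subtype.ext hψ⟩

/-- Preimage in `S` of a g.m.ideal of the quotient `S//N`. -/
def preimageIdeal {S : GammaSystem.{u, v} I} (N : GMIdeal S) (P : GMIdeal N.quotSystem) :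
    GMIdeal S where
  B i j := (P.B i j).comap (QuotientAddGroup.mk' (N.B i j))
  mul_mem_right {i j k} x z hx := by
    have hx' : (QuotientAddGroup.mk x : S.A i j ⧸ N.B i j) ∈ P.B i j := hx
    show (QuotientAddGroup.mk (S.mul x z) : S.A i k ⧸ N.B i k) ∈ P.B i k
    have h : (QuotientAddGroup.mk (S.mul x z) : S.A i k ⧸ N.B i k) =
        N.quotSystem.mul (QuotientAddGroup.mk x) (QuotientAddGroup.mk z) := rfl
    rw [h]
    exact P.mul_mem_right _ _ hx'
  mul_mem_left {i j k} x z hz := by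
    have hz' : (QuotientAddGroup.mk z : S.A j k ⧸ N.B j k) ∈ P.B j k := hz
    show (QuotientAddGroup.mk (S.mul x z) : S.A i k ⧸ N.B i k) ∈ P.B i k
    have h : (QuotientAddGroup.mk (S.mul x z) : S.A i k ⧸ N.B i k) =
        N.quotSystem.mul (QuotientAddGroup.mk x) (QuotientAddGroup.mk z) := rfl
    rw [h]
    exact P.mul_mem_left _ _ hz'

lemma le_preimage {S : GammaSystem.{u, v} I} (N : GMIdeal S) (P : GMIdeal N.quotSystem)
    {i j : I} {x : S.A i j} (hx : x ∈ N.B i j) : x ∈ (preimageIdeal N P).B i j := by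
  show (QuotientAddGroup.mk x : S.A i j ⧸ N.B i j) ∈ P.B i j
  rw [(QuotientAddGroup.eq_zero_iff x).mpr hx]
  exact zero_mem _

lemma out_mem {S : GammaSystem.{u, v} I} (N : GMIdeal S) (P : GMIdeal N.quotSystem)
    {i j : I} (p : ↥(P.B i j)) :
    Quotient.out (p.1 : S.A i j ⧸ N.B i j) ∈ (preimageIdeal N P).B i j := by
  show (QuotientAddGroup.mk (Quotient.out (p.1 : S.A i j ⧸ N.B i j)) : S.A i j ⧸ N.B i j)
    ∈ P.B i j
  erw [mk_out]
  exact p.2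

lemma psi_congr {S T : GammaSystem.{u, v} I} (N : GMIdeal S) (P : GMIdeal N.quotSystem)
    (ψ : GMHom (preimageIdeal N P).toSystem T)
    (hv : ∀ (i j : I) (q : ↥((preimageIdeal N P).B i j)),
      (q.1 : S.A i j) ∈ N.B i j → ψ.f i j q = 0)
    {i j : I} (q q' : ↥((preimageIdeal N P).B i j))
    (h : (QuotientAddGroup.mk q.1 : S.A i j ⧸ N.B i j) = QuotientAddGroup.mk q'.1) :
    ψ.f i j q = ψ.f i j q' := by
  have hmem : -q.1 + q'.1 ∈ N.B i j := QuotientAddGroup.eq.mp h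
  have hq' : q' = q + ⟨-q.1 + q'.1, le_preimage N P hmem⟩ :=
    Subtype.ext (add_neg_cancel_left q.1 q'.1).symm
  erw [hq', ψ.map_add, hv i j ⟨-q.1 + q'.1, le_preimage N P hmem⟩ hmem, add_zero]

/-- Factoring a g.m.hom out of the preimage ideal, vanishing on `N`, through `P`. -/
noncomputable def factorHom {S T : GammaSystem.{u, v} I} (N : GMIdeal S)
    (P : GMIdeal N.quotSystem) (ψ : GMHom (preimageIdeal N P).toSystem T)
    (hv : ∀ (i j : I) (q : ↥((preimageIdeal N P).B i j)),
      (q.1 : S.A i j) ∈ N.B i j → ψ.f i j q = 0) :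
    GMHom P.toSystem T where
  f i j p := ψ.f i j ⟨Quotient.out (p.1 : S.A i j ⧸ N.B i j), out_mem N P p⟩
  map_add {i j} x y := by
    have h1 : ψ.f i j ⟨Quotient.out ((x + y).1 : S.A i j ⧸ N.B i j), out_mem N P (x + y)⟩ =
        ψ.f i j (⟨Quotient.out (x.1 : S.A i j ⧸ N.B i j), out_mem N P x⟩ +
          ⟨Quotient.out (y.1 : S.A i j ⧸ N.B i j), out_mem N P y⟩) := by
      apply psi_congr N P ψ hv
      show (QuotientAddGroup.mk (Quotient.out ((x + y).1 : S.A i j ⧸ N.B i j)) :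
          S.A i j ⧸ N.B i j) =
        QuotientAddGroup.mk (Quotient.out (x.1 : S.A i j ⧸ N.B i j) +
          Quotient.out (y.1 : S.A i j ⧸ N.B i j))
      erw [mk_out, QuotientAddGroup.mk_add, mk_out, mk_out]
      rfl
    exact h1.trans (ψ.map_add _ _)
  map_mul {i j k} x z := by
    have h1 : ψ.f i k ⟨Quotient.out ((P.toSystem.mul x z).1 : S.A i k ⧸ N.B i k),
          out_mem N P (P.toSystem.mul x z)⟩ =
        ψ.f i k ((preimageIdeal N P).toSystem.mul
          ⟨Quotient.out (x.1 : S.A i j ⧸ N.B i j), out_mem N P x⟩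
          ⟨Quotient.out (z.1 : S.A j k ⧸ N.B j k), out_mem N P z⟩) := by
      apply psi_congr N P ψ hv
      show (QuotientAddGroup.mk (Quotient.out ((P.toSystem.mul x z).1 : S.A i k ⧸ N.B i k)) :
          S.A i k ⧸ N.B i k) =
        QuotientAddGroup.mk (S.mul (Quotient.out (x.1 : S.A i j ⧸ N.B i j))
          (Quotient.out (z.1 : S.A j k ⧸ N.B j k)))
      erw [mk_out]
      have h2 : (QuotientAddGroup.mk (S.mul (Quotient.out (x.1 : S.A i j ⧸ N.B i j))
            (Quotient.out (z.1 : S.A j k ⧸ N.B j k))) : S.A i k ⧸ N.B i k) =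
          N.quotSystem.mul (QuotientAddGroup.mk (Quotient.out (x.1 : S.A i j ⧸ N.B i j)))
            (QuotientAddGroup.mk (Quotient.out (z.1 : S.A j k ⧸ N.B j k))) := rfl
      erw [h2, mk_out, mk_out]
      rfl
    exact h1.trans (ψ.map_mul _ _)

lemma factorHom_surjective {S T : GammaSystem.{u, v} I} (N : GMIdeal S)
    (P : GMIdeal N.quotSystem) (ψ : GMHom (preimageIdeal N P).toSystem T)
    (hv : ∀ (i j : I) (q : ↥((preimageIdeal N P).B i j)),
      (q.1 : S.A i j) ∈ N.B i j → ψ.f i j q = 0)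
    (hs : ψ.Surjective) : (factorHom N P ψ hv).Surjective := by
  intro i j t
  obtain ⟨q, hq⟩ := hs i j t
  have hq1 : (QuotientAddGroup.mk q.1 : S.A i j ⧸ N.B i j) ∈ P.B i j := q.2
  refine ⟨⟨QuotientAddGroup.mk q.1, hq1⟩, ?_⟩
  have h := psi_congr N P ψ hv
    ⟨Quotient.out ((⟨QuotientAddGroup.mk q.1, hq1⟩ : ↥(P.B i j)).1 : S.A i j ⧸ N.B i j),
      out_mem N P ⟨QuotientAddGroup.mk q.1, hq1⟩⟩ q (by rw [mk_out])
  exact h.trans hq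

end RadicalProofAux

/-- **Theorem 2.1.** A class `r` of g.m.rings is a radical property of
g.m.rings iff: (R1') every g.m.homomorphic image of an `r`-g.m.ring is an
`r`-g.m.ring, and (R2') if every non-zero g.m.homomorphic image of a g.m.ring
`A` contains a non-zero `r`-g.m.ideal, then `A` is an `r`-g.m.ring. -/
theorem isGMRadicalProperty_iff (r : ∀ I₀ : Type u, GammaSystem.{u, v} I₀ → Prop) :
    IsGMRadicalProperty r ↔
      ((∀ (I₀ : Type u) (S T : GammaSystem I₀) (ψ : GMHom S T),
          ψ.Surjective → r I₀ S → r I₀ T) ∧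
       (∀ (I₀ : Type u) (S : GammaSystem I₀),
          (∀ (T : GammaSystem.{u, v} I₀) (ψ : GMHom S T), ψ.Surjective →
            ¬ T.IsZero → ∃ P : GMIdeal T, ¬ P.IsZero ∧ r I₀ P.toSystem) →
          r I₀ S)) := by
  constructor
  · rintro ⟨h1, h2⟩
    refine ⟨h1, ?_⟩
    intro I₀ S H
    obtain ⟨N, ⟨hNr, _⟩, hss⟩ := h2 I₀ S
    by_cases hz : N.quotSystem.IsZero
    · have hall : ∀ (i j : I₀) (x : S.A i j), x ∈ N.B i j := by
        intro i j x
        exact (QuotientAddGroup.eq_zero_iff x).mp (hz i j (QuotientAddGroup.mk x))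
      exact h1 I₀ N.toSystem S (GMHom.incl N) (GMHom.incl_surjective N hall) hNr
    · obtain ⟨P, hPnz, hPr⟩ := H N.quotSystem (GMHom.quotHom N) (GMHom.quotHom_surjective N) hz
      exact absurd (hss P hPr) hPnz
  · rintro ⟨h1, h2⟩
    refine ⟨h1, ?_⟩
    intro I₀ S
    have hNr : r I₀ (radIdeal r S).toSystem := by
      apply h2 I₀ (radIdeal r S).toSystem
      intro T ψ hsurj hTnz
      have hw : ∃ (M : GMIdeal S) (hM : r I₀ M.toSystem) (i j : I₀) (m : S.A i j)
          (hm : m ∈ M.B i j), ψ.f i j ⟨m, le_radIdeal r M hM i j hm⟩ ≠ 0 := by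
        by_contra hcon
        push_neg at hcon
        apply hTnz
        intro i j t
        obtain ⟨q, hq⟩ := hsurj i j t
        rw [← hq]
        have key : ∀ (x : S.A i j) (hx : x ∈ AddSubgroup.closure (radSet r S i j)),
            ψ.f i j ⟨x, hx⟩ = 0 := by
          intro x hx
          refine AddSubgroup.closure_induction
            (p := fun x hx => ψ.f i j ⟨x, hx⟩ = 0) ?_ ?_ ?_ ?_ hx
          · intro m hm
            obtain ⟨M, hM, hmM⟩ : ∃ M : GMIdeal S, ∃ _ : r I₀ M.toSystem, m ∈ M.B i j := by
              simpa [radSet] using hm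
            exact hcon M hM i j m hmM
          · exact ψ.map_zero'' i j
          · intro a b ha hb pa pb
            have h := ψ.map_add (⟨a, ha⟩ : ↥((radIdeal r S).B i j)) ⟨b, hb⟩
            rw [pa, pb, add_zero] at h
            exact h
          · intro a ha pa
            have h := ψ.map_neg'' i j (⟨a, ha⟩ : ↥((radIdeal r S).B i j))
            rw [pa, neg_zero] at h
            exact h
        exact key q.1 q.2
      obtain ⟨M, hM, i, j, m, hm, hne⟩ := hw
      refine ⟨imageIdeal (radIdeal r S) M (fun i' j' m' hm' => le_radIdeal r M hM i' j' hm')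
        ψ hsurj, ?_, ?_⟩
      · intro hzero
        apply hne
        have hmem : ψ.f i j ⟨m, le_radIdeal r M hM i j hm⟩ ∈
            (imageIdeal (radIdeal r S) M (fun i' j' m' hm' => le_radIdeal r M hM i' j' hm')
              ψ hsurj).B i j := ⟨m, hm, rfl⟩
        rw [hzero i j] at hmem
        exact AddSubgroup.mem_bot.mp hmem
      · exact h1 I₀ M.toSystem _ (imageHom _ _ _ ψ hsurj) (imageHom_surjective _ _ _ ψ hsurj) hM
    refine ⟨radIdeal r S, ⟨hNr, fun M hM => le_radIdeal r M hM⟩, ?_⟩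
    intro P hPr
    have hQr : r I₀ (preimageIdeal (radIdeal r S) P).toSystem := by
      apply h2 I₀ (preimageIdeal (radIdeal r S) P).toSystem
      intro T ψ hsurj hTnz
      by_cases hc : ∃ (i j : I₀) (q : ↥((preimageIdeal (radIdeal r S) P).B i j)),
          (q.1 : S.A i j) ∈ (radIdeal r S).B i j ∧ ψ.f i j q ≠ 0
      · obtain ⟨i, j, q, hqN, hq0⟩ := hc
        refine ⟨imageIdeal (preimageIdeal (radIdeal r S) P) (radIdeal r S)
          (fun i' j' m' hm' => le_preimage _ _ hm') ψ hsurj, ?_, ?_⟩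
        · intro hzero
          apply hq0
          have hmem : ψ.f i j q ∈ (imageIdeal (preimageIdeal (radIdeal r S) P) (radIdeal r S)
              (fun i' j' m' hm' => le_preimage _ _ hm') ψ hsurj).B i j :=
            ⟨q.1, hqN, congrArg (ψ.f i j) (Subtype.ext rfl)⟩
          rw [hzero i j] at hmem
          exact AddSubgroup.mem_bot.mp hmem
        · exact h1 I₀ (radIdeal r S).toSystem _ (imageHom _ _ _ ψ hsurj)
            (imageHom_surjective _ _ _ ψ hsurj) hNr
      · push_neg at hc
        have hv : ∀ (i j : I₀) (q : ↥((preimageIdeal (radIdeal r S) P).B i j)),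
            (q.1 : S.A i j) ∈ (radIdeal r S).B i j → ψ.f i j q = 0 :=
          fun i j q h => hc i j q h
        have hTr : r I₀ T := h1 I₀ P.toSystem T (factorHom _ P ψ hv)
          (factorHom_surjective _ P ψ hv hsurj) hPr
        refine ⟨GMIdeal.topIdeal T, ?_,
          h1 I₀ T _ (GMHom.toTop T) (GMHom.toTop_surjective T) hTr⟩
        intro hzero
        apply hTnz
        intro i j x
        have hx : x ∈ (GMIdeal.topIdeal T).B i j := AddSubgroup.mem_top x
        rw [hzero i j] at hx
        exact AddSubgroup.mem_bot.mp hx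
    intro i j
    rw [AddSubgroup.eq_bot_iff_forall]
    intro x hx
    have hout : Quotient.out ((⟨x, hx⟩ : ↥(P.B i j)).1 : S.A i j ⧸ (radIdeal r S).B i j) ∈
        (preimageIdeal (radIdeal r S) P).B i j := out_mem (radIdeal r S) P ⟨x, hx⟩
    have hmem : Quotient.out (x : S.A i j ⧸ (radIdeal r S).B i j) ∈ (radIdeal r S).B i j :=
      le_radIdeal r (preimageIdeal (radIdeal r S) P) hQr i j hout
    exact (mk_out _ x).symm.trans ((QuotientAddGroup.eq_zero_iff _).mpr hmem)
end
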